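/- arXiv:1407.8261 — 6 statements merged into one kernel-verified Lean document; each statement's English description precedes it below -/
import Mathlib

section
/- There is a size-preserving bijection between arch systems with n arches and plane forests with n nodes, which furthermore respects the substructure relation: A is a subsystem of B if and only if the corresponding forest of A is obtained from the forest of B by deleting nodes (reattaching children of deleted nodes to their grandparent, preserving left-to-right order). -/
/-- Plane forests, modelling non-crossing arch systems: `node c r` is an atom
(an arch over the contents `c`) followed by the rest of the forest `r`. -/
inductive PF : Type
  | nil : PF
  | node : PF → PF → PF
  deriving DecidableEq

namespace PF

/-- number of arches (nodes) -/
def size : PF → ℕ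
  | nil => 0
  | node c r => 1 + c.size + r.size

/-- concatenation of arch systems -/
def append : PF → PF → PF
  | nil, q => q
  | node c r, q => node c (r.append q)

instance : Append PF := ⟨PF.append⟩

/-- an atom: a nonempty arch system with a single outermost arch -/
def IsAtom (a : PF) : Prop := ∃ c, a = node c nil

/-- an atom or the empty arch system -/
def AtomOrNil (a : PF) : Prop := a = nil ∨ IsAtom a

/-- One-step arch deletion: `Del X Y` means `Y` is obtained from `X` by deleting one arch
(the contents of a deleted arch are spliced in its place). -/
inductive Del : PF → PF → Prop
  | root (c r : PF) : Del (node c r) (c ++ r)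
  | inside {c c' : PF} (r : PF) : Del c c' → Del (node c r) (node c' r)
  | rest {r r' : PF} (c : PF) : Del r r' → Del (node c r) (node c r')

/-- `Contains X A` : `A` is a substructure (subsystem) of `X`. -/
def Contains (X A : PF) : Prop := Relation.ReflTransGen Del X A

/-- the class of arch systems avoiding `A` -/
def Av (A : PF) : Set PF := {X | ¬ Contains X A}

/-- Wilf-equivalence: same counting sequence by number of arches. -/
def WilfEq (A B : PF) : Prop :=
  ∀ n, Set.ncard {X | X ∈ Av A ∧ X.size = n} = Set.ncard {X | X ∈ Av B ∧ X.size = n}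

/-- the generating function of `Av A`, counting by number of arches -/
noncomputable def F (A : PF) : PowerSeries ℚ :=
  PowerSeries.mk fun n => (Set.ncard {X | X ∈ Av A ∧ X.size = n} : ℚ)

end PF

/-- concatenation of a list of arch systems -/
def concatList (L : List PF) : PF := L.foldr (· ++ ·) PF.nil

/-- The equivalence relation `∼` whose classes are cohorts: the finest equivalence
relation satisfying the four closure rules. -/
inductive Sim : PF → PF → Prop
  | refl (A : PF) : Sim A A
  | symm {A B : PF} : Sim A B → Sim B A
  | trans {A B C : PF} : Sim A B → Sim B C → Sim A C
  | arch {A B : PF} : Sim A B → Sim (PF.node A PF.nil) (PF.node B PF.nil)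
  | subst {a b : PF} (P Q : PF) : PF.AtomOrNil a → PF.AtomOrNil b → Sim a b →
      Sim (P ++ a ++ Q) (P ++ b ++ Q)
  | comm {a b : PF} (P Q : PF) : PF.AtomOrNil a → PF.AtomOrNil b →
      Sim (P ++ a ++ b ++ Q) (P ++ b ++ a ++ Q)
  | rot {a b c : PF} : PF.AtomOrNil a → PF.AtomOrNil b → PF.AtomOrNil c →
      Sim (a ++ PF.node (b ++ c) PF.nil) (PF.node (a ++ b) PF.nil ++ c)

/-- the nest of `n` nested arches -/
def nest : ℕ → PF
  | 0 => PF.nil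
  | n + 1 => PF.node (nest n) PF.nil

/-- the `n`-th Motzkin number -/
def motzkin (n : ℕ) : ℕ := ∑ k ∈ Finset.range (n + 1), n.choose (2 * k) * catalan k

/-- the truncated continued fractions `C_n` of the Catalan generating function -/
noncomputable def Cfun : ℕ → PowerSeries ℚ
  | 0 => 1
  | n + 1 => (1 - PowerSeries.X * Cfun n)⁻¹

/-- a balanced parenthesis word (Dyck word): `true` = opening, `false` = closing -/
def BalancedW (w : List Bool) : Prop :=
  w.count true = w.count false ∧ ∀ p : List Bool, p <+: w → p.count false ≤ p.count true

/-- the height of a Dyck path -/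
def wheight (w : List Bool) : ℕ :=
  (w.inits.map fun p => p.count true - p.count false).foldr max 0

/-- One-step deletion of a matched pair of parentheses (an arch) in a word. -/
inductive WDel : List Bool → List Bool → Prop
  | mk (x y z : List Bool) : BalancedW y →
      WDel (x ++ [true] ++ y ++ [false] ++ z) (x ++ y ++ z)

/-- `l` avoids the pattern 231 -/
def Avoids231 (l : List ℕ) : Prop := ¬ ∃ a b c : ℕ, [b, c, a].Sublist l ∧ a < b ∧ b < c

/-- `p` and `s` are order-isomorphic sequences -/
def OrdIso (p s : List ℕ) : Prop :=
  p.length = s.length ∧ ∀ i j : ℕ, i < p.length → j < p.length →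
    (p.getD i 0 < p.getD j 0 ↔ s.getD i 0 < s.getD j 0)

namespace ArchAux

open List

/-- encoding of a plane forest as a balanced word -/
def toW : PF → List Bool
  | PF.nil => []
  | PF.node c r => true :: (toW c ++ false :: toW r)

lemma toW_append : ∀ a b : PF, toW (a ++ b) = toW a ++ toW b := by
  intro a
  induction a with
  | nil => intro b; rfl
  | node c r ihc ihr =>
      intro b
      show toW (PF.node c (r ++ b)) = _
      simp [toW, ihr]

lemma count_true_toW : ∀ X : PF, (toW X).count true = X.size := by
  intro X
  induction X with
  | nil => rfl
  | node c r ihc ihr => simp [toW, PF.size, ihc, ihr]; omega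

lemma count_false_toW : ∀ X : PF, (toW X).count false = X.size := by
  intro X
  induction X with
  | nil => rfl
  | node c r ihc ihr => simp [toW, PF.size, ihc, ihr]; omega

lemma toW_prefix_cond : ∀ (X : PF) (p : List Bool), p <+: toW X →
    p.count false ≤ p.count true := by
  intro X
  induction X with
  | nil =>
      intro p hp
      have : p = [] := List.prefix_nil.mp hp
      simp [this]
  | node c r ihc ihr =>
      intro p hp
      match p with
      | [] => simp
      | b :: q =>
          rw [show toW (PF.node c r) = true :: (toW c ++ false :: toW r) from rfl] at hp
          rw [List.cons_prefix_cons] at hp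
          obtain ⟨rfl, hq⟩ := hp
          -- q <+: toW c ++ false :: toW r
          obtain ⟨t, ht⟩ := hq
          rcases List.append_eq_append_iff.mp ht with ⟨a', ha, -⟩ | ⟨c', rfl, hd⟩
          · -- toW c = q ++ a'
            have : q <+: toW c := ⟨a', ha.symm⟩
            have := ihc q this
            simp [List.count_cons]
            omega
          · -- q = toW c ++ c', false :: toW r = c' ++ t
            have hc' : c' <+: false :: toW r := ⟨t, hd.symm⟩
            have hcc : (toW c).count false = (toW c).count true := by
              rw [count_true_toW, count_false_toW]
            match c' with
            | [] =>
                simp [List.count_cons, List.count_append, hcc]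
            | b' :: c'' =>
                rw [List.cons_prefix_cons] at hc'
                obtain ⟨rfl, hc''⟩ := hc'
                have := ihr c'' hc''
                simp [List.count_cons, List.count_append, hcc]
                omega

lemma balanced_toW (X : PF) : BalancedW (toW X) :=
  ⟨by rw [count_true_toW, count_false_toW], toW_prefix_cond X⟩

/-- unique splitting of `y ++ false :: z` with `y` balanced -/
lemma balanced_split_unique {y z y' z' : List Bool} (hy : BalancedW y) (hy' : BalancedW y')
    (h : y ++ false :: z = y' ++ false :: z') : y = y' ∧ z = z' := by
  have key : ∀ {a b : List Bool} {c d : List Bool}, BalancedW a → BalancedW c →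
      a ++ false :: b = c ++ false :: d → a.length ≤ c.length → a = c := by
    intro a b c d ha hc heq hlen
    have hpa : a ++ [false] <+: c ++ false :: d := by
      refine ⟨b, ?_⟩; simpa using heq
    by_cases hlt : a.length < c.length
    · have hpc : c <+: c ++ false :: d := ⟨false :: d, rfl⟩
      have : a ++ [false] <+: c :=
        List.prefix_of_prefix_length_le hpa hpc (by simp; omega)
      have := hc.2 _ this
      simp [List.count_append, ha.1] at this
    · have hlen' : a.length = c.length := by omega
      have hpa' : a <+: c ++ false :: d := ⟨false :: b, by simpa using heq⟩
      have hpc : c <+: c ++ false :: d := ⟨false :: d, rfl⟩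
      exact (List.prefix_of_prefix_length_le hpa' hpc (by omega)).eq_of_length hlen'
  have hyy : y = y' := by
    rcases le_total y.length y'.length with hl | hl
    · exact key hy hy' h hl
    · exact (key hy' hy h.symm hl).symm
  subst hyy
  exact ⟨rfl, by simpa using List.append_cancel_left h⟩

lemma toW_inj : ∀ {X Y : PF}, toW X = toW Y → X = Y := by
  intro X
  induction X with
  | nil =>
      intro Y h
      cases Y with
      | nil => rfl
      | node c r => simp [toW] at h
  | node c r ihc ihr =>
      intro Y h
      cases Y with
      | nil => simp [toW] at h
      | node c' r' =>
          rw [show toW (PF.node c r) = true :: (toW c ++ false :: toW r) from rfl,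
            show toW (PF.node c' r') = true :: (toW c' ++ false :: toW r') from rfl] at h
          obtain ⟨hc, hr⟩ := balanced_split_unique (balanced_toW c) (balanced_toW c')
            (by simpa using h)
          rw [ihc hc, ihr hr]

lemma toW_surj_aux : ∀ n (w : List Bool), w.length ≤ n → BalancedW w →
    ∃ X : PF, toW X = w := by
  intro n
  induction n with
  | zero =>
      intro w hl _
      have : w = [] := List.length_eq_zero_iff.mp (Nat.le_zero.mp hl)
      exact ⟨PF.nil, by simp [this, toW]⟩
  | succ n ih =>
      intro w hl hw
      match w with
      | [] => exact ⟨PF.nil, rfl⟩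
      | b :: w' =>
          have hb : b = true := by
            by_contra hb
            have : b = false := by cases b <;> simp_all
            subst this
            have := hw.2 [false] ⟨w', rfl⟩
            simp at this
          subst hb
          -- first return decomposition
          have hex : ∃ k, (w'.take k).count true < (w'.take k).count false := by
            refine ⟨w'.length, ?_⟩
            rw [List.take_length]
            have := hw.1
            simp [List.count_cons] at this
            omega
          classical
          obtain ⟨k, hkspec, hkmin⟩ : ∃ k,
              (w'.take k).count true < (w'.take k).count false ∧
              ∀ j, j < k → (w'.take j).count false ≤ (w'.take j).count true := by
            refine ⟨Nat.find hex, Nat.find_spec hex, ?_⟩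
            intro j hj
            have := Nat.find_min hex hj
            omega
          have hk1 : 1 ≤ k := by
            by_contra hk0
            have : k = 0 := by omega
            rw [this] at hkspec
            simp at hkspec
          have hklen : k ≤ w'.length := by
            by_contra hgt
            have hte : w'.take k = w' := List.take_of_length_le (by omega)
            have hmin := hkmin w'.length (by omega)
            rw [List.take_length] at hmin
            rw [hte] at hkspec
            omega
          have hidx : k - 1 < w'.length := by omega
          have htake : w'.take k = w'.take (k-1) ++ [w'[k-1]] := by
            conv_lhs => rw [show k = (k-1) + 1 from by omega]
            rw [List.take_succ, List.getElem?_eq_getElem hidx]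
            rfl
          have hlast : w'[k-1] = false := by
            rcases Bool.eq_false_or_eq_true (w'[k-1]) with hcase | hcase
            · exfalso
              rw [htake, hcase] at hkspec
              have := hkmin (k-1) (by omega)
              simp [List.count_append] at hkspec
              omega
            · exact hcase
          rw [hlast] at htake
          have hyc : (w'.take (k-1)).count false = (w'.take (k-1)).count true := by
            have h1 := hkmin (k-1) (by omega)
            rw [htake] at hkspec
            simp [List.count_append] at hkspec
            omega
          have hw' : w' = w'.take (k-1) ++ false :: w'.drop k := by
            conv_lhs => rw [← List.take_append_drop k w']
            rw [htake]
            simp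
          -- y := w'.take (k-1) is balanced
          have hyb : BalancedW (w'.take (k-1)) := by
            refine ⟨hyc.symm, ?_⟩
            intro p hp
            have hyl' : (w'.take (k-1)).length = k - 1 := by
              rw [List.length_take]; omega
            have hply : p.length ≤ k - 1 := by
              have := hp.length_le
              omega
            have hpw : p <+: w' := hp.trans (List.take_prefix _ _)
            have hpt : w'.take p.length = p := by
              obtain ⟨t, ht⟩ := hpw
              rw [← ht]
              simp
            have := hkmin p.length (by omega)
            rwa [hpt] at this
          -- z := w'.drop k is balanced
          have hzb : BalancedW (w'.drop k) := by
            constructor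
            · have h1 := hw.1
              rw [hw'] at h1
              simp [List.count_cons, List.count_append] at h1
              omega
            · intro p hp
              have hpre : (true :: (w'.take (k-1) ++ false :: p)) <+: (true :: w') := by
                rw [List.cons_prefix_cons]
                refine ⟨rfl, ?_⟩
                conv_rhs => rw [hw']
                obtain ⟨t, ht⟩ := hp
                exact ⟨t, by rw [← ht]; simp⟩
              have := hw.2 _ hpre
              simp [List.count_cons, List.count_append, hyc] at this
              omega
          have hwl : w'.length ≤ n := by simpa using hl
          have hyl : (w'.take (k-1)).length ≤ n := by
            rw [List.length_take]; omega
          have hzl : (w'.drop k).length ≤ n := by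
            rw [List.length_drop]; omega
          obtain ⟨Xy, hXy⟩ := ih _ hyl hyb
          obtain ⟨Xz, hXz⟩ := ih _ hzl hzb
          refine ⟨PF.node Xy Xz, ?_⟩
          rw [show toW (PF.node Xy Xz) = true :: (toW Xy ++ false :: toW Xz) from rfl,
            hXy, hXz]
          rw [← hw']

lemma toW_surj (w : List Bool) (hw : BalancedW w) : ∃ X : PF, toW X = w :=
  toW_surj_aux w.length w le_rfl hw

/-- WDel is stable under adding a common prefix and suffix -/
lemma WDel.wrap {u v : List Bool} (p s : List Bool) (h : WDel u v) :
    WDel (p ++ u ++ s) (p ++ v ++ s) := by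
  cases h with
  | mk x y z hy =>
      have := WDel.mk (p ++ x) y (z ++ s) hy
      simpa [List.append_assoc] using this

lemma del_toW {X Y : PF} (h : PF.Del X Y) : WDel (toW X) (toW Y) := by
  induction h with
  | root c r =>
      have := WDel.mk [] (toW c) (toW r) (balanced_toW c)
      simpa [toW, toW_append, List.append_assoc] using this
  | inside r h ih =>
      have := WDel.wrap [true] (false :: toW r) ih
      simpa [toW, List.append_assoc] using this
  | rest c h ih =>
      have := WDel.wrap (true :: (toW c ++ [false])) [] ih
      simpa [toW, List.append_assoc] using this

/-- the key splitting lemma -/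
lemma split_lemma {x y z c r : List Bool} (hc : BalancedW c) (hy : BalancedW y)
    (hE : x ++ [true] ++ y ++ [false] ++ z = c ++ false :: r) :
    (∃ z₁, c = x ++ [true] ++ y ++ [false] ++ z₁ ∧ z = z₁ ++ false :: r) ∨
    (∃ x₁, x = c ++ false :: x₁ ∧ r = x₁ ++ [true] ++ y ++ [false] ++ z) := by
  have hE' : x ++ (true :: (y ++ false :: z)) = c ++ (false :: r) := by
    simpa [List.append_assoc] using hE
  rcases List.append_eq_append_iff.mp hE' with ⟨a', hca, hba⟩ | ⟨c', hxc, hdc⟩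
  · -- c = x ++ a', true :: (y ++ false :: z) = a' ++ false :: r
    match a' with
    | [] => simp at hba
    | false :: a'' => simp at hba
    | true :: a'' =>
        have hba' : y ++ false :: z = a'' ++ false :: r := by
          simpa using hba
        rcases List.append_eq_append_iff.mp hba' with ⟨s, has, hbs⟩ | ⟨s, hys, hds⟩
        · -- a'' = y ++ s, false :: z = s ++ false :: r
          match s with
          | [] =>
              -- z = r, c = x ++ true :: y : contradiction
              exfalso
              simp at has hbs
              have hxp : x <+: c := ⟨true :: a'', hca.symm⟩
              have h2 := hc.2 x hxp
              have hcx := hc.1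
              rw [hca, has] at hcx
              simp [List.count_append, List.count_cons, hy.1] at hcx
              omega
          | true :: s' => simp at hbs
          | false :: s' =>
              left
              refine ⟨s', ?_, ?_⟩
              · rw [hca, has]; simp [List.append_assoc]
              · simpa using hbs
        · -- y = a'' ++ s, false :: r = s ++ false :: z
          match s with
          | [] =>
              exfalso
              simp at hys hds
              have hxp : x <+: c := ⟨true :: a'', hca.symm⟩
              have h2 := hc.2 x hxp
              have hcx := hc.1
              rw [hca, show a'' = y from hys.symm] at hcx
              simp [List.count_append, List.count_cons, hy.1] at hcx
              omega
          | true :: s' => simp at hds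
          | false :: s' =>
              -- y = a'' ++ false :: s' : contradiction via y's prefix condition
              exfalso
              have hpre : a'' ++ [false] <+: y := by
                rw [hys]; exact ⟨s', by simp⟩
              have h1 := hy.2 _ hpre
              have hxp : x <+: c := ⟨true :: a'', hca.symm⟩
              have h2 := hc.2 x hxp
              have hcx : c.count true = c.count false := hc.1
              rw [hca] at hcx
              simp [List.count_append, List.count_cons] at hcx h1
              omega
  · -- x = c ++ c', false :: r = c' ++ (true :: (y ++ false :: z))
    match c' with
    | [] => simp at hdc
    | true :: c'' => simp at hdc
    | false :: c'' =>
        right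
        refine ⟨c'', by simpa using hxc, ?_⟩
        simp at hdc
        rw [hdc]; simp [List.append_assoc]

lemma WDel_inv {w v : List Bool} (h : WDel w v) :
    ∃ x y z, BalancedW y ∧ w = x ++ [true] ++ y ++ [false] ++ z ∧ v = x ++ y ++ z := by
  cases h with
  | mk x y z hy => exact ⟨x, y, z, hy, rfl, rfl⟩

lemma wdel_toW {X : PF} {v : List Bool} (h : WDel (toW X) v) :
    ∃ Y : PF, PF.Del X Y ∧ v = toW Y := by
  induction X generalizing v with
  | nil =>
      exfalso
      obtain ⟨x, y, z, hy, hw, hv⟩ := WDel_inv h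
      simp [toW] at hw
  | node c r ihc ihr =>
      obtain ⟨x, y, z, hy, hw, hv⟩ := WDel_inv h
      rw [show toW (PF.node c r) = true :: (toW c ++ false :: toW r) from rfl] at hw
      match x with
      | [] =>
          have hw' : toW c ++ false :: toW r = y ++ false :: z := by
            simpa using hw
          obtain ⟨hcy, hrz⟩ := balanced_split_unique (balanced_toW c) hy hw'
          refine ⟨c ++ r, PF.Del.root c r, ?_⟩
          rw [hv, toW_append, ← hcy, ← hrz]
          simp
      | false :: x' =>
          exfalso
          have h2 := congrArg (fun l => l.head?) hw
          simp at h2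
      | true :: x' =>
          have hE : x' ++ [true] ++ y ++ [false] ++ z = toW c ++ false :: toW r := by
            have := congrArg List.tail hw
            simpa [List.append_assoc] using this.symm
          rcases split_lemma (balanced_toW c) hy hE with ⟨z₁, hceq, hzeq⟩ | ⟨x₁, hxeq, hreq⟩
          · have h' : WDel (toW c) (x' ++ y ++ z₁) := by
              rw [hceq]; exact WDel.mk x' y z₁ hy
            obtain ⟨c', hd, hv'⟩ := ihc h'
            refine ⟨PF.node c' r, PF.Del.inside r hd, ?_⟩
            rw [hv, hzeq]
            rw [show toW (PF.node c' r) = true :: (toW c' ++ false :: toW r) from rfl, ← hv']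
            simp [List.append_assoc]
          · have h' : WDel (toW r) (x₁ ++ y ++ z) := by
              rw [hreq]; exact WDel.mk x₁ y z hy
            obtain ⟨r', hd, hv'⟩ := ihr h'
            refine ⟨PF.node c r', PF.Del.rest c hd, ?_⟩
            rw [hv, hxeq]
            rw [show toW (PF.node c r') = true :: (toW c ++ false :: toW r') from rfl, ← hv']
            simp [List.append_assoc]

lemma rtg_toW_iff {X Y : PF} :
    Relation.ReflTransGen WDel (toW X) (toW Y) ↔ PF.Contains X Y := by
  constructor
  · intro h
    have aux : ∀ v, Relation.ReflTransGen WDel (toW X) v →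
        ∃ Z, v = toW Z ∧ PF.Contains X Z := by
      intro v hv
      induction hv with
      | refl => exact ⟨X, rfl, Relation.ReflTransGen.refl⟩
      | tail hab hbc ih =>
          obtain ⟨Z, rfl, hC⟩ := ih
          obtain ⟨Z', hd, rfl⟩ := wdel_toW hbc
          exact ⟨Z', rfl, hC.tail hd⟩
    obtain ⟨Z, hZ, hC⟩ := aux _ h
    rw [toW_inj hZ]
    exact hC
  · intro h
    exact h.lift toW (fun a b hab => del_toW hab)

lemma arch_forest_equiv :
    ∃ e : {w : List Bool // BalancedW w} ≃ PF,
      (∀ w : {w : List Bool // BalancedW w}, (e w).size = w.val.count true) ∧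
      (∀ v w : {w : List Bool // BalancedW w},
        Relation.ReflTransGen WDel w.val v.val ↔ PF.Contains (e w) (e v)) := by
  have hbij : Function.Bijective
      (fun X : PF => (⟨toW X, balanced_toW X⟩ : {w : List Bool // BalancedW w})) := by
    constructor
    · intro a b hab
      exact toW_inj (congrArg Subtype.val hab)
    · intro w
      obtain ⟨X, hX⟩ := toW_surj w.1 w.2
      exact ⟨X, Subtype.ext hX⟩
  set g := Equiv.ofBijective _ hbij with hg
  have hkey : ∀ w : {w : List Bool // BalancedW w}, toW (g.symm w) = w.val := by
    intro w
    exact congrArg Subtype.val (g.apply_symm_apply w)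
  refine ⟨g.symm, ?_, ?_⟩
  · intro w
    rw [← hkey w, count_true_toW]
  · intro v w
    rw [← hkey w, ← hkey v]
    exact rtg_toW_iff

end ArchAux


/-- There is a size-preserving bijection between arch systems (balanced words)
and plane forests which respects the substructure relation. -/
theorem arch_systems_equiv_plane_forests :
    ∃ e : {w : List Bool // BalancedW w} ≃ PF,
      (∀ w : {w : List Bool // BalancedW w}, (e w).size = w.val.count true) ∧
      (∀ v w : {w : List Bool // BalancedW w},
        Relation.ReflTransGen WDel w.val v.val ↔ PF.Contains (e w) (e v)) := by
  exact ArchAux.arch_forest_equiv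
end

section
/- A permutation is sortable by a single pass through a stack if and only if it avoids the pattern 231, and the map sending each stack-sortable permutation to the Dyck path of its push/pop operations is a bijection between 231-avoiding permutations of size n and Dyck paths of semi-length n. -/
/-- Running a sequence of stack operations (`true` = push, `false` = pop) on an
input list, producing the output list of popped elements. -/
def runStack : List Bool → List ℕ → List ℕ → List ℕ
  | [], _, _ => []
  | true :: w, x :: inp, st => runStack w inp (x :: st)
  | true :: _, [], _ => []
  | false :: w, inp, x :: st => x :: runStack w inp st
  | false :: _, _, [] => []

/-- `w` is a valid sequence of stack operations sorting the permutation `p`. -/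
def Sorts (w : List Bool) (p : List ℕ) : Prop :=
  BalancedW w ∧ w.count true = p.length ∧ runStack w p [] = List.range' 1 p.length


namespace StackAux

/-- Full-state stack execution: returns (output, remaining input, stack), or `none` on failure. -/
def exec : List Bool → List ℕ → List ℕ → Option (List ℕ × List ℕ × List ℕ)
  | [], inp, st => some ([], inp, st)
  | true :: w, x :: inp, st => exec w inp (x :: st)
  | true :: _, [], _ => none
  | false :: w, inp, x :: st => (exec w inp st).map fun r => (x :: r.1, r.2)
  | false :: _, _, [] => none

theorem runStack_eq_of_exec : ∀ (w : List Bool) (inp st o i s : List ℕ),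
    exec w inp st = some (o, i, s) → runStack w inp st = o
  | [], inp, st, o, i, s, h => by
      simp [exec] at h; simp [runStack, h.1]
  | true :: w, x :: inp, st, o, i, s, h => by
      simp only [exec] at h
      simpa [runStack] using runStack_eq_of_exec w inp (x :: st) o i s h
  | true :: w, [], st, o, i, s, h => by simp [exec] at h
  | false :: w, inp, x :: st, o, i, s, h => by
      simp only [exec, Option.map_eq_some_iff] at h
      obtain ⟨⟨o', i', s'⟩, h1, h2⟩ := h
      obtain ⟨rfl, rfl, rfl⟩ : x :: o' = o ∧ i' = i ∧ s' = s := by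
        simpa using h2
      simp [runStack, runStack_eq_of_exec w inp st o' i' s' h1]
  | false :: w, inp, [], o, i, s, h => by simp [exec] at h

theorem exec_append : ∀ (w₁ w₂ : List Bool) (inp st o₁ i₁ s₁ o₂ i₂ s₂ : List ℕ),
    exec w₁ inp st = some (o₁, i₁, s₁) → exec w₂ i₁ s₁ = some (o₂, i₂, s₂) →
    exec (w₁ ++ w₂) inp st = some (o₁ ++ o₂, i₂, s₂)
  | [], w₂, inp, st, o₁, i₁, s₁, o₂, i₂, s₂, h1, h2 => by
      simp [exec] at h1
      obtain ⟨rfl, rfl, rfl⟩ := h1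
      simpa using h2
  | true :: w, w₂, x :: inp, st, o₁, i₁, s₁, o₂, i₂, s₂, h1, h2 => by
      simp only [exec] at h1
      simpa [exec] using exec_append w w₂ inp (x :: st) o₁ i₁ s₁ o₂ i₂ s₂ h1 h2
  | true :: w, w₂, [], st, o₁, i₁, s₁, o₂, i₂, s₂, h1, h2 => by simp [exec] at h1
  | false :: w, w₂, inp, x :: st, o₁, i₁, s₁, o₂, i₂, s₂, h1, h2 => by
      simp only [exec, Option.map_eq_some_iff] at h1
      obtain ⟨⟨o', i', s'⟩, h1, h3⟩ := h1
      obtain ⟨rfl, rfl, rfl⟩ : x :: o' = o₁ ∧ i' = i₁ ∧ s' = s₁ := by simpa using h3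
      simp only [List.cons_append, exec, Option.map_eq_some_iff]
      exact ⟨(o' ++ o₂, i₂, s₂), exec_append w w₂ inp st o' i' s' o₂ i₂ s₂ h1 h2, rfl⟩
  | false :: w, w₂, inp, [], o₁, i₁, s₁, o₂, i₂, s₂, h1, h2 => by simp [exec] at h1

/-- extending the stack below a successful run -/
theorem exec_stack_mono : ∀ (w : List Bool) (inp st o i s st₀ : List ℕ),
    exec w inp st = some (o, i, s) → exec w inp (st ++ st₀) = some (o, i, s ++ st₀)
  | [], inp, st, o, i, s, st₀, h => by
      simp [exec] at h ⊢; obtain ⟨rfl, rfl, rfl⟩ := h; exact ⟨rfl, rfl, rfl⟩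
  | true :: w, x :: inp, st, o, i, s, st₀, h => by
      simp only [exec] at h ⊢
      exact exec_stack_mono w inp (x :: st) o i s st₀ h
  | true :: w, [], st, o, i, s, st₀, h => by simp [exec] at h
  | false :: w, inp, x :: st, o, i, s, st₀, h => by
      simp only [exec, Option.map_eq_some_iff] at h ⊢
      obtain ⟨⟨o', i', s'⟩, h1, h3⟩ := h
      obtain ⟨rfl, rfl, rfl⟩ : x :: o' = o ∧ i' = i ∧ s' = s := by simpa using h3
      simp [exec, exec_stack_mono w inp st o' i' s' st₀ h1]
  | false :: w, inp, [], o, i, s, st₀, h => by simp [exec] at h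

/-- extending the input after a successful run -/
theorem exec_input_mono : ∀ (w : List Bool) (inp st o i s rest : List ℕ),
    exec w inp st = some (o, i, s) → exec w (inp ++ rest) st = some (o, i ++ rest, s)
  | [], inp, st, o, i, s, rest, h => by
      simp [exec] at h ⊢; obtain ⟨rfl, rfl, rfl⟩ := h; exact ⟨rfl, rfl, rfl⟩
  | true :: w, x :: inp, st, o, i, s, rest, h => by
      simp only [exec, List.cons_append] at h ⊢
      exact exec_input_mono w inp (x :: st) o i s rest h
  | true :: w, [], st, o, i, s, rest, h => by simp [exec] at h
  | false :: w, inp, x :: st, o, i, s, rest, h => by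
      simp only [exec, Option.map_eq_some_iff] at h ⊢
      obtain ⟨⟨o', i', s'⟩, h1, h3⟩ := h
      obtain ⟨rfl, rfl, rfl⟩ : x :: o' = o ∧ i' = i ∧ s' = s := by simpa using h3
      exact ⟨(o', i' ++ rest, s'), exec_input_mono w inp st o' i' s' rest h1, rfl⟩
  | false :: w, inp, [], o, i, s, rest, h => by simp [exec] at h

theorem exec_input_drop : ∀ (w : List Bool) (inp st o i s : List ℕ),
    exec w inp st = some (o, i, s) → i = inp.drop (w.count true)
  | [], inp, st, o, i, s, h => by simp [exec] at h; simp [h.2.1]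
  | true :: w, x :: inp, st, o, i, s, h => by
      simp only [exec] at h
      have := exec_input_drop w inp (x :: st) o i s h
      simpa [List.count_cons] using this
  | true :: w, [], st, o, i, s, h => by simp [exec] at h
  | false :: w, inp, x :: st, o, i, s, h => by
      simp only [exec, Option.map_eq_some_iff] at h
      obtain ⟨⟨o', i', s'⟩, h1, h3⟩ := h
      obtain ⟨rfl, rfl, rfl⟩ : x :: o' = o ∧ i' = i ∧ s' = s := by simpa using h3
      have := exec_input_drop w inp st o' i' s' h1
      simpa [List.count_cons] using this
  | false :: w, inp, [], o, i, s, h => by simp [exec] at h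

theorem exec_conserve : ∀ (w : List Bool) (inp st o i s : List ℕ),
    exec w inp st = some (o, i, s) → (o ++ i ++ s).Perm (inp ++ st)
  | [], inp, st, o, i, s, h => by
      simp [exec] at h; obtain ⟨rfl, rfl, rfl⟩ := h; simp
  | true :: w, x :: inp, st, o, i, s, h => by
      simp only [exec] at h
      have := exec_conserve w inp (x :: st) o i s h
      exact this.trans List.perm_middle
  | true :: w, [], st, o, i, s, h => by simp [exec] at h
  | false :: w, inp, x :: st, o, i, s, h => by
      simp only [exec, Option.map_eq_some_iff] at h
      obtain ⟨⟨o', i', s'⟩, h1, h3⟩ := h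
      obtain ⟨rfl, rfl, rfl⟩ : x :: o' = o ∧ i' = i ∧ s' = s := by simpa using h3
      have := exec_conserve w inp st o' i' s' h1
      have h2 : (x :: (o' ++ i' ++ s')).Perm (x :: (inp ++ st)) := this.cons x
      simpa using h2.trans List.perm_middle.symm
  | false :: w, inp, [], o, i, s, h => by simp [exec] at h

theorem exec_out_length : ∀ (w : List Bool) (inp st o i s : List ℕ),
    exec w inp st = some (o, i, s) → o.length = w.count false
  | [], inp, st, o, i, s, h => by simp [exec] at h; simp [h.1]
  | true :: w, x :: inp, st, o, i, s, h => by
      simp only [exec] at h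
      simpa [List.count_cons] using exec_out_length w inp (x :: st) o i s h
  | true :: w, [], st, o, i, s, h => by simp [exec] at h
  | false :: w, inp, x :: st, o, i, s, h => by
      simp only [exec, Option.map_eq_some_iff] at h
      obtain ⟨⟨o', i', s'⟩, h1, h3⟩ := h
      obtain ⟨rfl, rfl, rfl⟩ : x :: o' = o ∧ i' = i ∧ s' = s := by simpa using h3
      simpa [List.count_cons] using exec_out_length w inp st o' i' s' h1
  | false :: w, inp, [], o, i, s, h => by simp [exec] at h

theorem cons_prefix_cons' {c : Bool} {u w : List Bool} (h : u <+: w) : c :: u <+: c :: w := by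
  obtain ⟨t, rfl⟩ := h; exact ⟨t, rfl⟩

/-- totality of execution under the prefix condition -/
theorem exec_total : ∀ (w : List Bool) (inp st : List ℕ),
    (∀ u, u <+: w → u.count false ≤ u.count true + st.length) →
    w.count true ≤ inp.length →
    ∃ o s, exec w inp st = some (o, inp.drop (w.count true), s)
  | [], inp, st, _, _ => ⟨[], st, by simp [exec]⟩
  | true :: w, [], st, hpre, hlen => by simp [List.count_cons] at hlen
  | true :: w, x :: inp, st, hpre, hlen => by
      obtain ⟨o, s, h⟩ := exec_total w inp (x :: st)
        (fun u hu => by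
          have := hpre (true :: u) (cons_prefix_cons' hu)
          simp [List.count_cons, List.length_cons] at this ⊢
          omega)
        (by simp only [List.count_cons] at hlen; simp at hlen ⊢; omega)
      refine ⟨o, s, ?_⟩
      simpa [exec, List.count_cons] using h
  | false :: w, inp, st, hpre, hlen => by
      have hst : 1 ≤ st.length := by
        have := hpre [false] ⟨w, rfl⟩
        simpa using this
      match st, hst with
      | t :: st₂, _ =>
        obtain ⟨o, s, h⟩ := exec_total w inp st₂
          (fun u hu => by
            have := hpre (false :: u) (cons_prefix_cons' hu)
            simp [List.count_cons, List.length_cons] at this ⊢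
            omega)
          (by simpa [List.count_cons] using hlen)
        refine ⟨t :: o, s, ?_⟩
        simp only [exec, h, Option.map_some, List.count_cons]
        simp

theorem exec_single_pop (x : ℕ) (inp st : List ℕ) :
    exec [false] inp (x :: st) = some ([x], inp, st) := by
  simp [exec]

theorem exec_single_push (x : ℕ) (inp st : List ℕ) :
    exec [true] (x :: inp) st = some ([], inp, x :: st) := by
  simp [exec]

/-- time reversal of a successful run -/
theorem exec_rev : ∀ (w : List Bool) (inp st o i s rest : List ℕ),
    exec w inp st = some (o, i, s) →
    exec ((w.map (!·)).reverse) (o.reverse ++ rest) s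
      = some ((inp.take (w.count true)).reverse, rest, st)
  | [], inp, st, o, i, s, rest, h => by
      simp [exec] at h; obtain ⟨rfl, rfl, rfl⟩ := h; simp [exec]
  | true :: w, x :: inp, st, o, i, s, rest, h => by
      simp only [exec] at h
      have ih := exec_rev w inp (x :: st) o i s rest h
      have happ := exec_append ((w.map (!·)).reverse) [false] (o.reverse ++ rest) s
        ((inp.take (w.count true)).reverse) rest (x :: st) [x] rest st ih
        (exec_single_pop x rest st)
      simp only [List.map_cons, List.reverse_cons]
      have hc : List.count true (true :: w) = List.count true w + 1 := by simp [List.count_cons]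
      rw [hc]
      simpa [List.take_succ_cons] using happ
  | true :: w, [], st, o, i, s, rest, h => by simp [exec] at h
  | false :: w, inp, x :: st, o, i, s, rest, h => by
      simp only [exec, Option.map_eq_some_iff] at h
      obtain ⟨⟨o', i', s'⟩, h1, h3⟩ := h
      obtain ⟨rfl, rfl, rfl⟩ : x :: o' = o ∧ i' = i ∧ s' = s := by simpa using h3
      have ih := exec_rev w inp st o' i' s' (x :: rest) h1
      have happ := exec_append ((w.map (!·)).reverse) [true] (o'.reverse ++ (x :: rest)) s'
        ((inp.take (w.count true)).reverse) (x :: rest) st [] rest (x :: st) ih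
        (exec_single_push x rest st)
      simp only [List.map_cons, List.reverse_cons]
      simpa [List.count_cons] using happ
  | false :: w, inp, [], o, i, s, rest, h => by simp [exec] at h

/-- uniqueness of the input, given the word and the output of a complete run -/
theorem exec_input_unique {w : List Bool} {p p' o : List ℕ}
    (h : exec w p [] = some (o, [], [])) (h' : exec w p' [] = some (o, [], []))
    (hl : p.length = w.count true) (hl' : p'.length = w.count true) : p = p' := by
  have r := exec_rev w p [] o [] [] [] h
  have r' := exec_rev w p' [] o [] [] [] h'
  rw [r'] at r
  have : (p.take (w.count true)).reverse = (p'.take (w.count true)).reverse := by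
    simpa using r.symm
  have := congrArg List.reverse this
  simpa [List.take_of_length_le hl.le, List.take_of_length_le hl'.le] using this

/-- elements below `x` in the stack are output after `x` in a complete run -/
theorem exec_pos : ∀ (w : List Bool) (inp st₁ : List ℕ) (x : ℕ) (st₂ o : List ℕ),
    exec w inp (st₁ ++ x :: st₂) = some (o, [], []) →
    ∃ o₁ o₂, o = o₁ ++ x :: o₂ ∧ (↑st₂ : Multiset ℕ) ≤ ↑o₂
  | [], inp, st₁, x, st₂, o, h => by
      simp [exec] at h
  | true :: w, y :: inp, st₁, x, st₂, o, h => by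
      simp only [exec] at h
      exact exec_pos w inp (y :: st₁) x st₂ o h
  | true :: w, [], st₁, x, st₂, o, h => by simp [exec] at h
  | false :: w, inp, st₁, x, st₂, o, h => by
      match st₁ with
      | b :: st₁' =>
        simp only [List.cons_append, exec, Option.map_eq_some_iff] at h
        obtain ⟨⟨o', i', s'⟩, h1, h3⟩ := h
        obtain ⟨rfl, rfl, rfl⟩ : b :: o' = o ∧ i' = ([] : List ℕ) ∧ s' = ([] : List ℕ) := by
          simpa using h3
        obtain ⟨o₁, o₂, rfl, hle⟩ := exec_pos w inp st₁' x st₂ o' h1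
        exact ⟨b :: o₁, o₂, rfl, hle⟩
      | [] =>
        simp only [List.nil_append, exec, Option.map_eq_some_iff] at h
        obtain ⟨⟨o', i', s'⟩, h1, h3⟩ := h
        obtain ⟨rfl, rfl, rfl⟩ : x :: o' = o ∧ i' = ([] : List ℕ) ∧ s' = ([] : List ℕ) := by
          simpa using h3
        refine ⟨[], o', rfl, ?_⟩
        have hperm := exec_conserve w inp st₂ o' [] [] h1
        have : (↑(inp ++ st₂) : Multiset ℕ) = ↑o' := by
          exact_mod_cast Quot.sound (by simp at hperm; exact hperm.symm)
        calc (↑st₂ : Multiset ℕ) ≤ ↑inp + ↑st₂ := le_add_self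
        _ = ↑(inp ++ st₂) := by simp
        _ = ↑o' := this

/-- the greedy stack-sorting word -/
def greedy : List ℕ → List ℕ → ℕ → List Bool
  | [], [], _ => []
  | x :: inp', [], m => true :: greedy inp' [x] m
  | [], t :: st₂, m => if t = m then false :: greedy [] st₂ (m + 1) else []
  | x :: inp', t :: st₂, m =>
    if t = m then false :: greedy (x :: inp') st₂ (m + 1)
    else true :: greedy inp' (x :: t :: st₂) m
termination_by inp st _ => 2 * inp.length + st.length

/-- a complete sorting run is the greedy one -/
theorem exec_word_unique : ∀ (w : List Bool) (inp st : List ℕ) (m : ℕ),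
    exec w inp st = some (List.range' m (w.count false), [], []) →
    w = greedy inp st m
  | [], inp, st, m, h => by
      simp only [exec, Option.some.injEq, Prod.mk.injEq, List.count_nil,
        List.range'_zero] at h
      obtain ⟨h1, h2, h3⟩ := h
      subst h2; subst h3
      simp [greedy]
  | true :: w, x :: inp, st, m, h => by
      simp only [exec] at h
      have hcnt : (true :: w).count false = w.count false := by simp [List.count_cons]
      rw [hcnt] at h
      have ih := exec_word_unique w inp (x :: st) m h
      match st with
      | [] => rw [ih]; simp [greedy]
      | t :: st₂ =>
        have htm : t ≠ m := by
          rintro rfl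
          obtain ⟨o₁, o₂, heq, hle⟩ := exec_pos w inp [] x (t :: st₂) _ h
          have hmem : t ∈ o₂ := by
            have : t ∈ (↑(t :: st₂) : Multiset ℕ) := by simp
            simpa using Multiset.mem_of_le hle this
          obtain ⟨F', hF⟩ : ∃ F', w.count false = F' + 1 := by
            rcases hF0 : w.count false with _ | F'
            · rw [hF0] at heq; simp at heq
            · exact ⟨F', rfl⟩
          rw [hF, List.range'_succ] at heq
          match o₁, heq with
          | [], heq =>
            simp only [List.nil_append] at heq
            injection heq with h1 h2
            rw [← h2] at hmem
            have := List.mem_range'_1.mp hmem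
            omega
          | c :: o₁', heq =>
            rw [List.cons_append] at heq
            injection heq with h1 h2
            have : t ∈ List.range' (t + 1) F' := by
              rw [h2]
              exact List.mem_append.mpr (Or.inr (List.mem_cons.mpr (Or.inr hmem)))
            have := List.mem_range'_1.mp this
            omega
        rw [ih]; simp [greedy, htm]
  | true :: w, [], st, m, h => by simp [exec] at h
  | false :: w, inp, t :: st₂, m, h => by
      simp only [exec, Option.map_eq_some_iff] at h
      obtain ⟨⟨o', i', s'⟩, h1, h3⟩ := h
      have hcnt : (false :: w).count false = w.count false + 1 := by simp [List.count_cons]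
      rw [hcnt, List.range'_succ] at h3
      have h3' : t :: o' = m :: List.range' (m + 1) (w.count false) ∧
          i' = ([] : List ℕ) ∧ s' = ([] : List ℕ) := by simpa using h3
      obtain ⟨hto, rfl, rfl⟩ := h3'
      injection hto with h4 h5
      subst h4
      rw [h5] at h1
      have ih := exec_word_unique w inp st₂ (t + 1) h1
      rw [ih]
      match inp with
      | [] => simp [greedy]
      | x :: inp' => simp [greedy]
  | false :: w, inp, [], m, h => by simp [exec] at h

theorem cons_prefix_cons'' {α : Type*} {a : α} {u w : List α} (h : u <+: w) :
    a :: u <+: a :: w := List.cons_prefix_cons.mpr ⟨rfl, h⟩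

theorem prefix_append_cases {α : Type*} : ∀ (l₁ : List α) {u l₂ : List α}, u <+: l₁ ++ l₂ →
    u <+: l₁ ∨ ∃ v, u = l₁ ++ v ∧ v <+: l₂
  | [], u, l₂, h => .inr ⟨u, rfl, h⟩
  | a :: l₁, u, l₂, h => by
    match u with
    | [] => exact .inl List.nil_prefix
    | b :: u' =>
      rw [List.cons_append, List.cons_prefix_cons] at h
      obtain ⟨rfl, h⟩ := h
      rcases prefix_append_cases l₁ h with h' | ⟨v, rfl, hv⟩
      · exact .inl (cons_prefix_cons'' h')
      · exact .inr ⟨v, rfl, hv⟩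

theorem balanced_glue {y z : List Bool} (hy : BalancedW y) (hz : BalancedW z) :
    BalancedW (true :: y ++ false :: z) := by
  constructor
  · simp [List.count_append, List.count_cons, hy.1, hz.1]
    omega
  · intro u hu
    match u with
    | [] => simp
    | b :: u' =>
      rw [List.cons_append, List.cons_prefix_cons] at hu
      obtain ⟨rfl, hu⟩ := hu
      rcases prefix_append_cases y hu with h' | ⟨v, rfl, hv⟩
      · have := hy.2 u' h'
        simp only [List.count_cons]
        simp
        omega
      · match v, hv with
        | [], _ =>
          have := hy.2 y (List.prefix_refl y)
          simp [List.count_append, List.count_cons]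
          omega
        | c :: v', hv =>
          rw [List.cons_prefix_cons] at hv
          obtain ⟨rfl, hv⟩ := hv
          have h1 := hz.2 v' hv
          have h2 := hy.1
          simp [List.count_append, List.count_cons]
          omega

/-- first-return decomposition of a nonempty balanced word -/
theorem balanced_decomp {w : List Bool} (hb : BalancedW w) (hne : w ≠ []) :
    ∃ y z, w = true :: y ++ false :: z ∧ BalancedW y ∧ BalancedW z := by
  match w, hne with
  | b :: w', _ =>
    have hbt : b = true := by
      rcases b with _ | _
      · have := hb.2 [false] ⟨w', rfl⟩
        simpa using this
      · rfl
    subst hbt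
    have hPex : ∃ j, (w'.take j).count true + 1 ≤ (w'.take j).count false := by
      refine ⟨w'.length, ?_⟩
      have := hb.1
      simp only [List.take_length]
      simp [List.count_cons] at this
      omega
    have hspec := Nat.find_spec hPex
    have hmin : ∀ i, i < Nat.find hPex →
        ¬ ((w'.take i).count true + 1 ≤ (w'.take i).count false) :=
      fun i hi => Nat.find_min hPex hi
    have hj₀pos : Nat.find hPex ≠ 0 := by
      intro h0
      rw [h0] at hspec
      simpa using hspec
    obtain ⟨j, hj⟩ : ∃ j, Nat.find hPex = j + 1 := ⟨Nat.find hPex - 1, by omega⟩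
    rw [hj] at hspec
    simp only [hj] at hmin
    have hj₀le : j + 1 ≤ w'.length := by
      by_contra hgt
      have h1 : w'.take (j+1) = w' := List.take_of_length_le (by omega)
      have h2 : w'.take w'.length = w' := List.take_length ..
      have := hmin w'.length (by omega)
      rw [h2] at this
      rw [h1] at hspec
      exact this hspec
    have hjlt : j < w'.length := by omega
    have htake : w'.take (j+1) = w'.take j ++ [w'[j]] := by
      rw [List.take_succ]
      simp [List.getElem?_eq_getElem hjlt]
    rw [htake] at hspec
    have hnotj := hmin j (by omega)
    have hbf : w'[j] = false := by
      rcases hw : w'[j] with _ | _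
      · rfl
      · rw [hw] at hspec
        simp [List.count_append, List.count_cons] at hspec
        omega
    rw [hbf] at hspec
    simp [List.count_append, List.count_cons] at hspec
    refine ⟨w'.take j, w'.drop (j+1), ?_, ⟨?_, ?_⟩, ⟨?_, ?_⟩⟩
    · have hwsplit := List.take_append_drop j w'
      rw [List.drop_eq_getElem_cons hjlt, hbf] at hwsplit
      conv_lhs => rw [← hwsplit]
      simp
    · -- counts of y
      omega
    · -- prefix condition of y
      intro v hv
      have hvlen : v.length ≤ j := by
        have := hv.length_le
        simp [List.length_take] at this
        omega
      have hveq : v = w'.take v.length :=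
        List.prefix_iff_eq_take.mp (hv.trans (List.take_prefix j w'))
      by_contra hcon
      have hcon' : v.count true + 1 ≤ v.count false := by omega
      rw [hveq] at hcon'
      exact hmin v.length (by omega) hcon'
    · -- counts of z
      have hw' := hb.1
      have hsplit := List.take_append_drop (j+1) w'
      have h1 : (w'.take (j+1) ++ w'.drop (j+1)).count true = w'.count true := by
        rw [hsplit]
      have h2 : (w'.take (j+1) ++ w'.drop (j+1)).count false = w'.count false := by
        rw [hsplit]
      rw [List.count_append, htake, hbf] at h1 h2
      simp [List.count_append, List.count_cons] at h1 h2 hw'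
      omega
    · -- prefix condition of z
      intro v hv
      have hpre : (true :: (w'.take j ++ false :: v)) <+: (true :: w') := by
        apply cons_prefix_cons''
        obtain ⟨r, hr⟩ := hv
        refine ⟨r, ?_⟩
        have hwsplit := List.take_append_drop j w'
        rw [List.drop_eq_getElem_cons hjlt, hbf] at hwsplit
        rw [← hr] at hwsplit
        conv_rhs => rw [← hwsplit]
        simp
      have := hb.2 _ hpre
      simp [List.count_append, List.count_cons] at this
      omega

theorem avoids_sublist {p q : List ℕ} (h : q.Sublist p) (hp : Avoids231 p) : Avoids231 q := by
  rintro ⟨a, b, c, hs, h1, h2⟩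
  exact hp ⟨a, b, c, hs.trans h, h1, h2⟩

theorem avoids_glue {m : ℕ} {py pz : List ℕ} (hy : Avoids231 py) (hz : Avoids231 pz)
    (hym : ∀ v ∈ py, v < m) (hzm : ∀ v ∈ pz, m < v) : Avoids231 (m :: py ++ pz) := by
  rintro ⟨a, b, c, hsub, hab, hbc⟩
  rw [List.cons_append] at hsub
  cases hsub with
  | cons _ h =>
    rw [List.sublist_append_iff] at h
    obtain ⟨l₁, l₂, heq, h1, h2⟩ := h
    match l₁, heq with
    | [], heq =>
      subst heq
      exact hz ⟨a, b, c, by simpa using h2, hab, hbc⟩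
    | [b'], heq =>
      obtain ⟨rfl, hl2⟩ : b = b' ∧ [c, a] = l₂ := by simpa using heq
      subst hl2
      have hbm : b < m := hym b (h1.subset (by simp))
      have ham : m < a := hzm a (h2.subset (by simp))
      omega
    | [b', c'], heq =>
      obtain ⟨rfl, rfl, hl2⟩ : b = b' ∧ c = c' ∧ [a] = l₂ := by simpa using heq
      subst hl2
      have hcm : c < m := hym c (h1.subset (by simp))
      have ham : m < a := hzm a (h2.subset (by simp))
      omega
    | [b', c', a'], heq =>
      obtain ⟨rfl, rfl, rfl, hl2⟩ : b = b' ∧ c = c' ∧ a = a' ∧ l₂ = [] := by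
        simpa using heq
      exact hy ⟨a, b, c, h1, hab, hbc⟩
    | b' :: c' :: a' :: x :: l, heq => simp at heq
  | cons_cons _ h =>
    rw [List.sublist_append_iff] at h
    obtain ⟨l₁, l₂, heq, h1, h2⟩ := h
    match l₁, heq with
    | [], heq =>
      subst heq
      have h3 : m < c := hzm c (h2.subset (by simp))
      have h4 : m < a := hzm a (h2.subset (by simp))
      omega
    | [c'], heq =>
      obtain ⟨rfl, hl2⟩ : c = c' ∧ [a] = l₂ := by simpa using heq
      subst hl2
      have h3 : c < m := hym c (h1.subset (by simp))
      omega
    | [c', a'], heq =>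
      obtain ⟨rfl, rfl, hl2⟩ : c = c' ∧ a = a' ∧ l₂ = [] := by simpa using heq
      have h3 : a < m := hym a (h1.subset (by simp))
      have h4 : c < m := hym c (h1.subset (by simp))
      omega
    | c' :: a' :: x :: l, heq => simp at heq

theorem split_of_avoids : ∀ (q : List ℕ) (x : ℕ),
    (∀ c a : ℕ, [c, a].Sublist q → ¬(a < x ∧ x < c)) → (∀ y ∈ q, y ≠ x) →
    q = q.filter (fun v => decide (v < x)) ++ q.filter (fun v => decide (x < v))
  | [], x, _, _ => by simp
  | y :: q', x, hpat, hne => by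
    rcases Nat.lt_trichotomy y x with hyx | hyx | hyx
    · have ih := split_of_avoids q' x
        (fun c a h => hpat c a (h.cons y)) (fun v hv => hne v (by simp [hv]))
      rw [List.filter_cons_of_pos (by simpa using hyx)]
      rw [List.filter_cons_of_neg (by simp; omega)]
      rw [List.cons_append, ← ih]
    · exact absurd hyx (hne y (by simp))
    · have hall : ∀ a ∈ q', x < a := by
        intro a ha
        have hsub : [y, a].Sublist (y :: q') :=
          List.Sublist.cons₂ y (List.singleton_sublist.mpr ha)
        have := hpat y a hsub
        have hax : a ≠ x := hne a (by simp [ha])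
        omega
      rw [List.filter_cons_of_neg (by simp; omega)]
      rw [List.filter_cons_of_pos (by simpa using hyx)]
      rw [List.filter_eq_nil_iff.mpr (fun a ha => by have := hall a ha; simp; omega),
        List.filter_eq_self.mpr (fun a ha => by simpa using hall a ha)]
      simp

theorem avoids_nil : Avoids231 [] := by
  rintro ⟨a, b, c, hs, -, -⟩
  simp at hs

theorem balanced_nil : BalancedW [] :=
  ⟨by simp, fun p hp => by simp [List.prefix_nil.mp hp]⟩

theorem range'_glue (a d e : ℕ) :
    List.range' (a+1) d ++ (a+1+d) :: List.range' (a+d+2) e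
      = List.range' (a+1) (d+1+e) := by
  have h2 := List.range'_append (s := a+1) (m := d) (n := e+1) (step := 1)
  simp only [one_mul] at h2
  rw [List.range'_succ] at h2
  have e1 : a + 1 + d + 1 = a + d + 2 := by omega
  rw [e1] at h2
  rw [h2]
  congr 1
  omega

theorem exec_glue {w₁ w₂ : List Bool} {q₁ q₂ r₁ r₂ : List ℕ} (x : ℕ)
    (h₁ : exec w₁ q₁ [] = some (r₁, [], []))
    (h₂ : exec w₂ q₂ [] = some (r₂, [], [])) :
    exec ((true :: w₁) ++ (false :: w₂)) ((x :: q₁) ++ q₂) []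
      = some (r₁ ++ x :: r₂, [], []) := by
  have h1' : exec w₁ (q₁ ++ q₂) [x] = some (r₁, q₂, [x]) := by
    have h := exec_input_mono w₁ q₁ [] r₁ [] [] q₂ h₁
    simpa using exec_stack_mono w₁ (q₁ ++ q₂) [] r₁ q₂ [] [x] (by simpa using h)
  have h2' : exec (false :: w₂) q₂ [x] = some (x :: r₂, [], []) := by
    have h := exec_append [false] w₂ q₂ [x] [x] q₂ [] r₂ [] []
      (exec_single_pop x q₂ []) h₂
    simpa using h
  have h3 := exec_append w₁ (false :: w₂) (q₁ ++ q₂) [x] r₁ q₂ [x] (x :: r₂) [] [] h1' h2'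
  have hstep : exec ((true :: w₁) ++ (false :: w₂)) ((x :: q₁) ++ q₂) []
      = exec (w₁ ++ false :: w₂) (q₁ ++ q₂) [x] := by
    simp only [List.cons_append, exec]
  rw [hstep, h3]

/-- every balanced word is the sorting word of some 231-avoiding permutation -/
theorem perm_of_word : ∀ (N : ℕ) (w : List Bool), w.length ≤ N → BalancedW w → ∀ a : ℕ,
    ∃ p : List ℕ, p.Perm (List.range' (a+1) (w.count true)) ∧ Avoids231 p ∧
      exec w p [] = some (List.range' (a+1) (w.count true), [], [])
  | _, [], _, _, a => ⟨[], by simp, avoids_nil, by simp [exec]⟩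
  | 0, b :: w', hlen, _, _ => by simp at hlen
  | N + 1, b :: w', hlen, hb, a => by
    obtain ⟨y, z, heqw, hy, hz⟩ := balanced_decomp hb (by simp)
    have hlyz : y.length + z.length + 2 = (b :: w').length := by
      rw [heqw]; simp; omega
    have hylen : y.length ≤ N := by simp at hlen hlyz; omega
    have hzlen : z.length ≤ N := by simp at hlen hlyz; omega
    obtain ⟨py, hpyP, hpyA, hpyE⟩ := perm_of_word N y hylen hy a
    obtain ⟨pz, hpzP, hpzA, hpzE⟩ := perm_of_word N z hzlen hz (a + y.count true + 1)
    have hoff : a + y.count true + 1 + 1 = a + y.count true + 2 := by omega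
    rw [hoff] at hpzP hpzE
    have hK : (b :: w').count true = y.count true + 1 + z.count true := by
      rw [heqw]; simp [List.count_append, List.count_cons]; omega
    have hym : ∀ v ∈ py, v < a + 1 + y.count true := fun v hv => by
      have := List.mem_range'_1.mp (hpyP.subset hv); omega
    have hzm : ∀ v ∈ pz, a + 1 + y.count true < v := fun v hv => by
      have := List.mem_range'_1.mp (hpzP.subset hv); omega
    refine ⟨(a + 1 + y.count true) :: py ++ pz, ?_, ?_, ?_⟩
    · rw [hK, ← range'_glue a (y.count true) (z.count true)]
      have h1 := hpyP.append hpzP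
      simp only [List.cons_append]
      exact (h1.cons _).trans List.perm_middle.symm
    · exact avoids_glue hpyA hpzA hym hzm
    · rw [hK, ← range'_glue a (y.count true) (z.count true), heqw]
      exact exec_glue (a + 1 + y.count true) hpyE hpzE

/-- every 231-avoiding permutation has a sorting word -/
theorem sortable_of_avoids : ∀ (N : ℕ) (p : List ℕ) (a k : ℕ), p.length ≤ N →
    p.Perm (List.range' (a+1) k) → Avoids231 p →
    ∃ w, BalancedW w ∧ w.count true = k ∧
      exec w p [] = some (List.range' (a+1) k, [], [])
  | _, [], a, k, _, hperm, _ => by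
    have hk : k = 0 := by have := hperm.length_eq; simp at this; omega
    subst hk
    exact ⟨[], balanced_nil, by simp, by simp [exec]⟩
  | 0, x :: q, a, k, hlen, _, _ => by simp at hlen
  | N + 1, x :: q, a, k, hlen, hperm, hav => by
    have hnd : (x :: q).Nodup := hperm.nodup_iff.mpr List.nodup_range'
    have hxq : x ∉ q := (List.nodup_cons.mp hnd).1
    have hpat : ∀ c a', [c, a'].Sublist q → ¬(a' < x ∧ x < c) := by
      intro c a' hsub hca
      exact hav ⟨a', x, c, List.Sublist.cons₂ x hsub, hca.1, hca.2⟩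
    have hsplit := split_of_avoids q x hpat (fun y hy hyx => hxq (hyx ▸ hy))
    have hxmem : x ∈ List.range' (a+1) k := hperm.subset (by simp)
    have hxr := List.mem_range'_1.mp hxmem
    obtain ⟨d, hd⟩ : ∃ d, x = a + 1 + d := ⟨x - (a+1), by omega⟩
    obtain ⟨e, he⟩ : ∃ e, k = d + 1 + e := ⟨k - d - 1, by omega⟩
    have hq : q.Perm ((List.range' (a+1) k).erase x) := by
      have h1 := List.perm_cons_erase hxmem
      exact (List.perm_cons x).mp (hperm.trans h1)
    have herase : (List.range' (a+1) k).erase x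
        = List.range' (a+1) d ++ List.range' (a+d+2) e := by
      rw [he, ← range'_glue a d e]
      rw [List.erase_append_right _ (by
        intro hmem
        have := List.mem_range'_1.mp hmem
        omega)]
      rw [hd, List.erase_cons_head]
    rw [herase] at hq
    have hq₁ : (q.filter (fun v => decide (v < x))).Perm (List.range' (a+1) d) := by
      have h := hq.filter (fun v => decide (v < x))
      have hf1 : List.filter (fun v => decide (v < x)) (List.range' (a+1) d)
          = List.range' (a+1) d :=
        List.filter_eq_self.mpr (fun v hv => by
          have := List.mem_range'_1.mp hv
          simp; omega)
      have hf2 : List.filter (fun v => decide (v < x)) (List.range' (a+d+2) e)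
          = [] :=
        List.filter_eq_nil_iff.mpr (fun v hv => by
          have := List.mem_range'_1.mp hv
          simp; omega)
      rw [List.filter_append, hf1, hf2] at h
      simpa using h
    have hq₂ : (q.filter (fun v => decide (x < v))).Perm (List.range' (a+d+2) e) := by
      have h := hq.filter (fun v => decide (x < v))
      have hf1 : List.filter (fun v => decide (x < v)) (List.range' (a+1) d)
          = [] :=
        List.filter_eq_nil_iff.mpr (fun v hv => by
          have := List.mem_range'_1.mp hv
          simp; omega)
      have hf2 : List.filter (fun v => decide (x < v)) (List.range' (a+d+2) e)
          = List.range' (a+d+2) e :=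
        List.filter_eq_self.mpr (fun v hv => by
          have := List.mem_range'_1.mp hv
          simp; omega)
      rw [List.filter_append, hf1, hf2] at h
      simpa using h
    have hsubq₁ : (q.filter (fun v => decide (v < x))).Sublist (x :: q) :=
      (List.filter_sublist (l := q)).trans (List.sublist_cons_self x q)
    have hsubq₂ : (q.filter (fun v => decide (x < v))).Sublist (x :: q) :=
      (List.filter_sublist (l := q)).trans (List.sublist_cons_self x q)
    have hlq₁ : (q.filter (fun v => decide (v < x))).length ≤ N := by
      have := (List.filter_sublist (p := fun v => decide (v < x)) (l := q)).length_le
      simp at hlen; omega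
    have hlq₂ : (q.filter (fun v => decide (x < v))).length ≤ N := by
      have := (List.filter_sublist (p := fun v => decide (x < v)) (l := q)).length_le
      simp at hlen; omega
    obtain ⟨w₁, hb₁, hc₁, he₁⟩ := sortable_of_avoids N _ a d hlq₁ hq₁
      (avoids_sublist hsubq₁ hav)
    obtain ⟨w₂, hb₂, hc₂, he₂⟩ := sortable_of_avoids N _ (a+d+1) e hlq₂
      (by rw [show a+d+1+1 = a+d+2 by omega]; exact hq₂)
      (avoids_sublist hsubq₂ hav)
    rw [show a+d+1+1 = a+d+2 by omega] at he₂
    refine ⟨(true :: w₁) ++ (false :: w₂), balanced_glue hb₁ hb₂, ?_, ?_⟩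
    · simp [List.count_append, List.count_cons, hc₁, hc₂]
      omega
    · have hgoal : (x :: q : List ℕ)
          = (x :: q.filter (fun v => decide (v < x))) ++ q.filter (fun v => decide (x < v)) := by
        rw [List.cons_append, ← hsplit]
      rw [hgoal, he, ← range'_glue a d e, ← hd]
      exact exec_glue x he₁ he₂

theorem exec_of_sorts {w : List Bool} {p : List ℕ} (h : Sorts w p) :
    exec w p [] = some (List.range' 1 p.length, [], []) := by
  obtain ⟨⟨hcnt, hpre⟩, hlen, hrun⟩ := h
  obtain ⟨o, st, he⟩ := exec_total w p []
    (fun u hu => by simpa using hpre u hu) (by omega)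
  have hdrop : p.drop (w.count true) = [] := by
    rw [hlen]; simp
  rw [hdrop] at he
  have ho : o = List.range' 1 p.length := by
    rw [← runStack_eq_of_exec w p [] o [] st he, hrun]
  have hperm := exec_conserve w p [] o [] st he
  have hlens := hperm.length_eq
  simp at hlens
  have hst : st = [] := by
    have h1 : o.length = p.length := by rw [ho]; simp
    have h2 : st.length = 0 := by omega
    exact List.length_eq_zero_iff.mp h2
  rw [ho, hst] at he
  exact he

theorem sorts_of_exec {w : List Bool} {p : List ℕ} (hb : BalancedW w)
    (hcnt : w.count true = p.length)
    (he : exec w p [] = some (List.range' 1 p.length, [], [])) : Sorts w p :=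
  ⟨hb, hcnt, runStack_eq_of_exec w p [] _ [] [] he⟩

end StackAux


/-- A permutation is sortable by a single pass through a stack iff it avoids 231,
and recording pushes and pops as up and down steps is a bijection between
231-avoiding permutations of size `n` and Dyck paths of semi-length `n`. -/
theorem stack_sortable_iff_avoids_231 (n : ℕ) :
    (∀ p : List ℕ, p.Perm (List.range' 1 n) → ((∃ w, Sorts w p) ↔ Avoids231 p)) ∧
    ∃ e : {p : List ℕ // p.Perm (List.range' 1 n) ∧ Avoids231 p} ≃
        {w : List Bool // BalancedW w ∧ w.count true = n},
      ∀ p, Sorts (e p).val p.val := by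
  constructor
  · intro p hperm
    have hplen : p.length = n := by rw [hperm.length_eq]; simp
    constructor
    · rintro ⟨w, hw⟩
      have he := StackAux.exec_of_sorts hw
      have hk : w.count true = p.length := hw.2.1
      obtain ⟨p', hp'P, hp'A, hp'E⟩ := StackAux.perm_of_word w.length w le_rfl hw.1 0
      rw [hk] at hp'P hp'E
      simp only [Nat.zero_add] at hp'P hp'E
      have hp'len : p'.length = p.length := by rw [hp'P.length_eq]; simp
      have hpp : p = p' :=
        StackAux.exec_input_unique he hp'E hk.symm (hp'len.trans hk.symm)
      rw [hpp]; exact hp'A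
    · intro hav
      obtain ⟨w, hb, hcnt, he⟩ := StackAux.sortable_of_avoids p.length p 0 n le_rfl
        (by simpa using hperm) hav
      refine ⟨w, StackAux.sorts_of_exec hb (hcnt.trans hplen.symm) ?_⟩
      rw [hplen]
      simpa using he
  · have key : ∀ w : {w : List Bool // BalancedW w ∧ w.count true = n},
        ∃ p : {p : List ℕ // p.Perm (List.range' 1 n) ∧ Avoids231 p},
          StackAux.exec w.val p.val [] = some (List.range' 1 n, [], []) := by
      rintro ⟨w, hb, hcnt⟩
      obtain ⟨p, hP, hA, hE⟩ := StackAux.perm_of_word w.length w le_rfl hb 0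
      rw [hcnt] at hP hE
      simp only [Nat.zero_add] at hP hE
      exact ⟨⟨p, hP, hA⟩, hE⟩
    choose Φ hΦ using key
    have hlenΦ : ∀ w, (Φ w).val.length = n := fun w => by
      rw [(Φ w).2.1.length_eq]; simp
    have hsorts : ∀ w, Sorts w.val (Φ w).val := fun w =>
      StackAux.sorts_of_exec w.2.1 (w.2.2.trans (hlenΦ w).symm)
        (by rw [hlenΦ w]; exact hΦ w)
    have hinj : Function.Injective Φ := by
      intro w w' hww
      have h1 : w.val = StackAux.greedy (Φ w).val [] 1 := by
        apply StackAux.exec_word_unique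
        have hcf : w.val.count false = n := by rw [← w.2.1.1, w.2.2]
        rw [hcf]
        exact hΦ w
      have h2 : w'.val = StackAux.greedy (Φ w).val [] 1 := by
        apply StackAux.exec_word_unique
        have hcf : w'.val.count false = n := by rw [← w'.2.1.1, w'.2.2]
        rw [hcf, hww]
        exact hΦ w'
      exact Subtype.ext (h1.trans h2.symm)
    have hsurj : Function.Surjective Φ := by
      rintro ⟨p, hperm, hav⟩
      have hplen : p.length = n := by rw [hperm.length_eq]; simp
      obtain ⟨w, hb, hcnt, he⟩ := StackAux.sortable_of_avoids p.length p 0 n le_rfl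
        (by simpa using hperm) hav
      refine ⟨⟨w, hb, hcnt⟩, Subtype.ext ?_⟩
      have h1 := hΦ ⟨w, hb, hcnt⟩
      have he' : StackAux.exec w p [] = some (List.range' 1 n, [], []) := by
        simpa using he
      exact StackAux.exec_input_unique h1 he'
        ((hlenΦ ⟨w, hb, hcnt⟩).trans hcnt.symm) (hplen.trans hcnt.symm)
    refine ⟨(Equiv.ofBijective Φ ⟨hinj, hsurj⟩).symm, ?_⟩
    intro p
    have h2 : Φ ((Equiv.ofBijective Φ ⟨hinj, hsurj⟩).symm p) = p :=
      (Equiv.ofBijective Φ ⟨hinj, hsurj⟩).apply_symm_apply p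
    have h3 := hsorts ((Equiv.ofBijective Φ ⟨hinj, hsurj⟩).symm p)
    rw [h2] at h3
    exact h3
end

section
/- The generating functions C_n defined by C_0 = 1 and C_n = 1/(1 - t C_{n-1}) converge coefficientwise to the Catalan generating function C(t) = Σ Cat_m t^m; more precisely, the coefficient of t^m in C_n equals Cat_m whenever m ≤ n. -/
lemma Cfun_eq (n : ℕ) : Cfun (n+1) = 1 + PowerSeries.X * (Cfun n * Cfun (n+1)) := by
  have hc : PowerSeries.constantCoeff (1 - PowerSeries.X * Cfun n) ≠ 0 := by simp
  have h := PowerSeries.mul_inv_cancel _ hc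
  have he : Cfun (n+1) = (1 - PowerSeries.X * Cfun n)⁻¹ := rfl
  rw [he]
  linear_combination h

/-- The coefficient of `t^m` in `C_n` equals the `m`-th Catalan number whenever `m ≤ n`. -/
theorem Cfun_coeff_eq_catalan (n m : ℕ) (h : m ≤ n) :
    PowerSeries.coeff m (Cfun n) = (catalan m : ℚ) := by
  induction m using Nat.strong_induction_on generalizing n with
  | _ m ih =>
    match m, n, h with
    | 0, n, _ =>
      cases n with
      | zero => simp [Cfun]
      | succ n => rw [Cfun_eq]; simp
    | m+1, n+1, h =>
      rw [Cfun_eq, map_add, PowerSeries.coeff_succ_X_mul, PowerSeries.coeff_mul]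
      rw [catalan_succ', Nat.cast_sum]
      have h1 : PowerSeries.coeff (m+1) (1 : PowerSeries ℚ) = 0 := by
        simp [PowerSeries.coeff_one]
      rw [h1, zero_add]
      refine Finset.sum_congr rfl fun ij hij => ?_
      rw [Finset.HasAntidiagonal.mem_antidiagonal] at hij
      rw [ih ij.1 (by omega) n (by omega), ih ij.2 (by omega) (n+1) (by omega),
        Nat.cast_mul]
end

section
/- Let A be an arch system with atom factorisation A = a_1 a_2 ⋯ a_m and a_1 = arch over A_1. Then the generating function F_A of arch systems avoiding A satisfies F_A = 1 + t F_{A_1} F_A + t (F_{a_1} - F_{A_1}) F_{a_2⋯a_m} + t Σ_{k=2}^{m} (F_{a_1⋯a_k} - F_{a_1⋯a_{k-1}}) F_{a_k⋯a_m}. -/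
namespace PF

@[simp] lemma nil_append (q : PF) : (nil ++ q : PF) = q := rfl
@[simp] lemma node_append (c r q : PF) : (node c r ++ q : PF) = node c (r ++ q) := rfl

@[simp] lemma append_nil (p : PF) : (p ++ nil : PF) = p := by
  induction p with
  | nil => rfl
  | node c r ihc ihr => simp [ihr]

lemma append_assoc (p q r : PF) : (p ++ q) ++ r = p ++ (q ++ r) := by
  induction p with
  | nil => rfl
  | node c t ihc iht => simp [iht]

@[simp] lemma size_append (p q : PF) : (p ++ q).size = p.size + q.size := by
  induction p with
  | nil => simp [size]
  | node c r ihc ihr => show (node c (r ++ q)).size = _; simp [size, ihr]; ring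

lemma del_size {X Y : PF} (h : Del X Y) : Y.size + 1 = X.size := by
  induction h with
  | root c r => simp [size]; ring
  | inside r _ ih => simp [size]; omega
  | rest c _ ih => simp [size]; omega

lemma contains_size {X Y : PF} (h : Contains X Y) : Y.size ≤ X.size := by
  induction h with
  | refl => exact le_refl _
  | tail _ hd ih => have := del_size hd; omega

lemma contains_nil (X : PF) : Contains X nil := by
  have : ∀ n (X : PF), X.size ≤ n → Contains X nil := by
    intro n
    induction n with
    | zero => intro X hX; cases X with
      | nil => exact Relation.ReflTransGen.refl
      | node c r => simp [size] at hX
    | succ n ih =>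
      intro X hX
      cases X with
      | nil => exact Relation.ReflTransGen.refl
      | node c r =>
        have h1 : Del (node c r) (c ++ r) := Del.root c r
        have := del_size h1
        exact Relation.ReflTransGen.head h1 (ih _ (by omega))
  exact this X.size X le_rfl

lemma del_append_left {C C' : PF} (R : PF) (h : Del C C') : Del (C ++ R) (C' ++ R) := by
  induction h with
  | root c r => simpa [append_assoc] using Del.root c (r ++ R)
  | inside r hd => exact Del.inside _ hd
  | rest c _ ih => exact Del.rest _ ih

lemma del_append_right {R R' : PF} (C : PF) (h : Del R R') : Del (C ++ R) (C ++ R') := by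
  induction C with
  | nil => simpa using h
  | node c r ihc ihr => exact Del.rest _ ihr

lemma contains_append_left {C C' : PF} (R : PF) (h : Contains C C') :
    Contains (C ++ R) (C' ++ R) :=
  Relation.ReflTransGen.lift (· ++ R) (fun _ _ h => del_append_left R h) _ _ h

lemma contains_append_right {R R' : PF} (C : PF) (h : Contains R R') :
    Contains (C ++ R) (C ++ R') :=
  Relation.ReflTransGen.lift (C ++ ·) (fun _ _ h => del_append_right C h) _ _ h

lemma contains_append {C C' R R' : PF} (h1 : Contains C C') (h2 : Contains R R') :
    Contains (C ++ R) (C' ++ R') :=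
  (contains_append_left R h1).trans (contains_append_right C' h2)

lemma contains_left (P Q : PF) : Contains (P ++ Q) P := by
  simpa using contains_append_right P (contains_nil Q)

lemma contains_right (P Q : PF) : Contains (P ++ Q) Q := by
  simpa using contains_append_left Q (contains_nil P)

lemma contains_node {C C' R R' : PF} (h1 : Contains C C') (h2 : Contains R R') :
    Contains (node C R) (node C' R') := by
  refine Relation.ReflTransGen.trans
    (Relation.ReflTransGen.lift (fun z => node z R) (fun _ _ h => Del.inside R h) _ _ h1)
    (Relation.ReflTransGen.lift (fun z => node C' z) (fun _ _ h => Del.rest C' h) _ _ h2)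

end PF

namespace PF

lemma del_append_cases {C R Z : PF} (h : Del (C ++ R) Z) :
    (∃ C', Del C C' ∧ Z = C' ++ R) ∨ (∃ R', Del R R' ∧ Z = C ++ R') := by
  induction C generalizing Z with
  | nil => exact Or.inr ⟨Z, by simpa using h, rfl⟩
  | node c r ihc ihr =>
    rw [node_append] at h
    cases h with
    | root c' r' =>
      exact Or.inl ⟨c ++ r, Del.root c r, by rw [append_assoc]⟩
    | inside r' hd =>
      exact Or.inl ⟨node _ r, Del.inside r hd, rfl⟩
    | rest c' hd =>
      rcases ihr hd with ⟨r', hr, rfl⟩ | ⟨R', hR, rfl⟩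
      · exact Or.inl ⟨node c r', Del.rest c hr, rfl⟩
      · exact Or.inr ⟨R', hR, rfl⟩

lemma contains_append_cases {C R Z : PF} (h : Contains (C ++ R) Z) :
    ∃ Z₁ Z₂, Z = Z₁ ++ Z₂ ∧ Contains C Z₁ ∧ Contains R Z₂ := by
  have key : ∀ {W Z : PF}, Contains W Z → ∀ C R : PF, W = C ++ R →
      ∃ Z₁ Z₂, Z = Z₁ ++ Z₂ ∧ Contains C Z₁ ∧ Contains R Z₂ := by
    intro W Z h
    induction h using Relation.ReflTransGen.head_induction_on with
    | refl =>
      intro C R hW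
      exact ⟨C, R, hW, Relation.ReflTransGen.refl, Relation.ReflTransGen.refl⟩
    | head hd _tl ih =>
      intro C R hW
      subst hW
      rcases del_append_cases hd with ⟨C', hC, hW1⟩ | ⟨R', hR, hW1⟩
      · obtain ⟨Z₁, Z₂, hZ, h1, h2⟩ := ih C' R hW1
        exact ⟨Z₁, Z₂, hZ, Relation.ReflTransGen.head hC h1, h2⟩
      · obtain ⟨Z₁, Z₂, hZ, h1, h2⟩ := ih C R' hW1
        exact ⟨Z₁, Z₂, hZ, h1, Relation.ReflTransGen.head hR h2⟩
  exact key h C R rfl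

/-- Characterization of containment in `node C R` of a pattern `node P T`. -/
lemma contains_node_iff {C R P T : PF} :
    Contains (node C R) (node P T) ↔
      (Contains C P ∧ Contains R T) ∨ Contains (C ++ R) (node P T) := by
  constructor
  · intro h
    have key : ∀ {W : PF}, Contains W (node P T) → ∀ C R : PF, W = node C R →
        (Contains C P ∧ Contains R T) ∨ Contains (C ++ R) (node P T) := by
      intro W h
      induction h using Relation.ReflTransGen.head_induction_on with
      | refl =>
        intro C R hW
        cases hW
        exact Or.inl ⟨Relation.ReflTransGen.refl, Relation.ReflTransGen.refl⟩
      | head hd _tl ih =>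
        intro C R hW
        subst hW
        cases hd with
        | root c r => exact Or.inr _tl
        | @inside _ C' _ hC =>
          rcases ih C' R rfl with ⟨h1, h2⟩ | h1
          · exact Or.inl ⟨Relation.ReflTransGen.head hC h1, h2⟩
          · exact Or.inr (Relation.ReflTransGen.head (del_append_left R hC) h1)
        | @rest _ R' _ hR =>
          rcases ih C R' rfl with ⟨h1, h2⟩ | h1
          · exact Or.inl ⟨h1, Relation.ReflTransGen.head hR h2⟩
          · exact Or.inr (Relation.ReflTransGen.head (del_append_right C hR) h1)
    exact key h C R rfl
  · rintro (⟨h1, h2⟩ | h1)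
    · exact contains_node h1 h2
    · exact Relation.ReflTransGen.head (Del.root C R) h1

end PF

open PF

@[simp] lemma concatList_nil : concatList [] = PF.nil := rfl
@[simp] lemma concatList_cons (a : PF) (M : List PF) :
    concatList (a :: M) = a ++ concatList M := rfl

lemma concatList_append (M N : List PF) :
    concatList (M ++ N) = concatList M ++ concatList N := by
  induction M with
  | nil => simp
  | cons a M ih => simp [ih, PF.append_assoc]

lemma concatList_take_drop (M : List PF) (k : ℕ) :
    concatList M = concatList (M.take k) ++ concatList (M.drop k) := by
  conv_lhs => rw [← List.take_append_drop k M]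
  exact concatList_append _ _

lemma append_eq_nil_pf {Z₁ Z₂ : PF} (h : Z₁ ++ Z₂ = PF.nil) : Z₁ = PF.nil ∧ Z₂ = PF.nil := by
  cases Z₁ with
  | nil => exact ⟨rfl, h⟩
  | node c r => simp at h

lemma concatList_split {M : List PF} (hM : ∀ a ∈ M, a.IsAtom) {Z₁ Z₂ : PF}
    (h : concatList M = Z₁ ++ Z₂) :
    ∃ k ≤ M.length, Z₁ = concatList (M.take k) ∧ Z₂ = concatList (M.drop k) := by
  induction M generalizing Z₁ with
  | nil =>
    obtain ⟨h1, h2⟩ := append_eq_nil_pf h.symm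
    exact ⟨0, by simp, by simpa using h1, by simpa using h2⟩
  | cons a M ih =>
    obtain ⟨c, rfl⟩ := hM a (by simp)
    cases Z₁ with
    | nil => exact ⟨0, by simp, rfl, by simpa using h.symm⟩
    | node c₁ r₁ =>
      simp only [concatList_cons, node_append, nil_append] at h ⊢
      injection h with h1 h2
      obtain ⟨k, hk, hZ1, hZ2⟩ := ih (fun a ha => hM a (by simp [ha])) h2
      refine ⟨k + 1, by simpa using hk, ?_, ?_⟩
      · subst h1; subst hZ1; simp
      · simpa using hZ2

lemma contains_concat_take (M : List PF) (k : ℕ) :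
    Contains (concatList M) (concatList (M.take k)) := by
  rw [concatList_take_drop M k]; exact contains_left _ _

lemma contains_concat_drop (M : List PF) (k : ℕ) :
    Contains (concatList M) (concatList (M.drop k)) := by
  rw [concatList_take_drop M k]; exact contains_right _ _

/-- Split characterization: containment of a concatenation of atoms in an append. -/
lemma contains_append_concat_iff {M : List PF} (hM : ∀ a ∈ M, a.IsAtom) (C R : PF) :
    Contains (C ++ R) (concatList M) ↔
      ∃ k ≤ M.length, Contains C (concatList (M.take k)) ∧
        Contains R (concatList (M.drop k)) := by
  constructor
  · intro h
    obtain ⟨Z₁, Z₂, hZ, h1, h2⟩ := contains_append_cases h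
    obtain ⟨k, hk, rfl, rfl⟩ := concatList_split hM hZ
    exact ⟨k, hk, h1, h2⟩
  · rintro ⟨k, hk, h1, h2⟩
    rw [concatList_take_drop M k]
    exact contains_append h1 h2

lemma sizeFin (n : ℕ) : {X : PF | X.size = n}.Finite := by
  induction n using Nat.strong_induction_on with
  | _ n ih =>
    cases n with
    | zero =>
      have : {X : PF | X.size = 0} ⊆ {PF.nil} := by
        intro X hX
        cases X with
        | nil => simp
        | node c r => simp [PF.size] at hX
      exact Set.Finite.subset (Set.finite_singleton _) this
    | succ n =>
      have hsub : {X : PF | X.size = n + 1} ⊆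
          ⋃ i ∈ Finset.range (n + 1), (fun p : PF × PF => PF.node p.1 p.2) ''
            ({C : PF | C.size = i} ×ˢ {R : PF | R.size = n - i}) := by
        intro X hX
        cases X with
        | nil => simp [PF.size] at hX
        | node c r =>
          simp only [Set.mem_setOf_eq, PF.size] at hX
          simp only [Set.mem_iUnion]
          refine ⟨c.size, ?_, ⟨(c, r), ⟨rfl, ?_⟩, rfl⟩⟩
          · simp; omega
          · simp only [Set.mem_setOf_eq]; omega
      refine Set.Finite.subset ?_ hsub
      refine Set.Finite.biUnion (Finset.range (n+1)).finite_toSet fun i hi => ?_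
      exact Set.Finite.image _ ((ih i (by simpa using hi)).prod (ih (n - i) (by omega)))

lemma cntFin (S : Set PF) (n : ℕ) : {X | X ∈ S ∧ X.size = n}.Finite :=
  Set.Finite.subset (sizeFin n) (fun X hX => hX.2)

/-- counting function -/
noncomputable def cnt (S : Set PF) (n : ℕ) : ℕ := Set.ncard {X | X ∈ S ∧ X.size = n}

lemma coeff_F (A : PF) (n : ℕ) :
    PowerSeries.coeff n (PF.F A) = (cnt (Av A) n : ℚ) := by
  simp [PF.F, cnt, PowerSeries.coeff_mk]

lemma ncard_sprod {α β : Type*} (s : Set α) (t : Set β) :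
    (s ×ˢ t).ncard = s.ncard * t.ncard := by
  rw [← Nat.card_coe_set_eq, ← Nat.card_coe_set_eq, ← Nat.card_coe_set_eq,
    Nat.card_congr (Equiv.Set.prod s t), Nat.card_prod]

lemma ncard_biUnion {α ι : Type*} [DecidableEq ι] (s : Finset ι) (f : ι → Set α)
    (hfin : ∀ i ∈ s, (f i).Finite)
    (hdisj : ∀ i ∈ s, ∀ j ∈ s, i ≠ j → Disjoint (f i) (f j)) :
    (⋃ i ∈ s, f i).ncard = ∑ i ∈ s, (f i).ncard := by
  induction s using Finset.induction_on with
  | empty => simp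
  | insert a s ha ih =>
    have hfa := hfin a (Finset.mem_insert_self a s)
    have hfU : (⋃ i ∈ s, f i).Finite :=
      Set.Finite.biUnion s.finite_toSet (fun i hi => hfin i (Finset.mem_insert_of_mem hi))
    have hd : Disjoint (f a) (⋃ i ∈ s, f i) := by
      rw [Set.disjoint_iUnion_right]
      intro i
      rw [Set.disjoint_iUnion_right]
      intro hi
      exact hdisj a (Finset.mem_insert_self a s) i (Finset.mem_insert_of_mem hi)
        (fun h => ha (h ▸ hi))
    rw [Finset.set_biUnion_insert, Finset.sum_insert ha, Set.ncard_union_eq hd hfa hfU,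
      ih (fun i hi => hfin i (Finset.mem_insert_of_mem hi))
        (fun i hi j hj hne =>
          hdisj i (Finset.mem_insert_of_mem hi) j (Finset.mem_insert_of_mem hj) hne)]

/-- counting pairs with product conditions and total size `n` -/
lemma cnt_pairs (S T : Set PF) (n : ℕ) :
    {p : PF × PF | p.1 ∈ S ∧ p.2 ∈ T ∧ p.1.size + p.2.size = n}.ncard =
      ∑ ij ∈ Finset.HasAntidiagonal.antidiagonal n, cnt S ij.1 * cnt T ij.2 := by
  have heq : {p : PF × PF | p.1 ∈ S ∧ p.2 ∈ T ∧ p.1.size + p.2.size = n} =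
      ⋃ ij ∈ Finset.HasAntidiagonal.antidiagonal n,
        ({X | X ∈ S ∧ X.size = ij.1} ×ˢ {X | X ∈ T ∧ X.size = ij.2}) := by
    ext ⟨C, R⟩
    simp only [Set.mem_setOf_eq, Set.mem_iUnion, Set.mem_prod, Finset.HasAntidiagonal.mem_antidiagonal,
      Prod.exists]
    constructor
    · rintro ⟨h1, h2, h3⟩
      exact ⟨C.size, R.size, h3, ⟨h1, rfl⟩, ⟨h2, rfl⟩⟩
    · rintro ⟨i, j, hij, ⟨h1, hi⟩, ⟨h2, hj⟩⟩
      exact ⟨h1, h2, by omega⟩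
  rw [heq, ncard_biUnion]
  · refine Finset.sum_congr rfl fun ij _ => ?_
    rw [ncard_sprod]; rfl
  · exact fun ij _ => ((cntFin S ij.1).prod (cntFin T ij.2))
  · intro i hi j hj hne
    rw [Set.disjoint_left]
    rintro ⟨C, R⟩ ⟨⟨_, hC⟩, ⟨_, hR⟩⟩ ⟨⟨_, hC'⟩, ⟨_, hR'⟩⟩
    simp only [Finset.HasAntidiagonal.mem_antidiagonal] at hi hj
    apply hne
    have : i.1 = j.1 := by omega
    have : i.2 = j.2 := by omega
    exact Prod.ext ‹i.1 = j.1› ‹i.2 = j.2›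

lemma pairsFin (S T : Set PF) (n : ℕ) :
    {p : PF × PF | p.1 ∈ S ∧ p.2 ∈ T ∧ p.1.size + p.2.size = n}.Finite := by
  refine Set.Finite.subset
    (Set.Finite.biUnion (Finset.HasAntidiagonal.antidiagonal n).finite_toSet
      (fun ij _ => (sizeFin ij.1).prod (sizeFin ij.2))) ?_
  rintro ⟨C, R⟩ ⟨h1, h2, h3⟩
  simp only [Set.mem_iUnion, Set.mem_prod, Set.mem_setOf_eq, Finset.mem_coe,
    Finset.HasAntidiagonal.mem_antidiagonal]
  exact ⟨(C.size, R.size), h3, rfl, rfl⟩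

lemma node_inj : Function.Injective (fun p : PF × PF => PF.node p.1 p.2) := by
  rintro ⟨a, b⟩ ⟨c, d⟩ h
  simp only at h
  injection h with h1 h2
  simp [h1, h2]

lemma master_count (A : PF) (M : ℕ) (cellC cellR : ℕ → Set PF)
    (hchar : ∀ C R : PF, PF.node C R ∈ Av A ↔
      ∃ k ∈ Finset.range (M + 1), C ∈ cellC k ∧ R ∈ cellR k)
    (hdisj : ∀ i ∈ Finset.range (M + 1), ∀ j ∈ Finset.range (M + 1), i ≠ j →
      Disjoint (cellC i) (cellC j)) (n : ℕ) :
    cnt (Av A) (n + 1) = ∑ k ∈ Finset.range (M + 1),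
      ∑ ij ∈ Finset.HasAntidiagonal.antidiagonal n, cnt (cellC k) ij.1 * cnt (cellR k) ij.2 := by
  have himg : {X | X ∈ Av A ∧ X.size = n + 1} =
      (fun p : PF × PF => PF.node p.1 p.2) ''
        {p : PF × PF | PF.node p.1 p.2 ∈ Av A ∧ p.1.size + p.2.size = n} := by
    ext X
    constructor
    · rintro ⟨h1, h2⟩
      cases X with
      | nil => simp [PF.size] at h2
      | node c r =>
        refine ⟨(c, r), ⟨h1, ?_⟩, rfl⟩
        simp only [PF.size] at h2
        show c.size + r.size = n
        omega
    · rintro ⟨⟨C, R⟩, ⟨h1, h2⟩, rfl⟩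
      simp only at h1 h2
      exact ⟨h1, by simp [PF.size]; omega⟩
  have hT : {p : PF × PF | PF.node p.1 p.2 ∈ Av A ∧ p.1.size + p.2.size = n} =
      ⋃ k ∈ Finset.range (M + 1),
        {p : PF × PF | p.1 ∈ cellC k ∧ p.2 ∈ cellR k ∧ p.1.size + p.2.size = n} := by
    ext ⟨C, R⟩
    simp only [Set.mem_setOf_eq, Set.mem_iUnion, hchar]
    constructor
    · rintro ⟨⟨k, hk, h1, h2⟩, h3⟩
      exact ⟨k, hk, h1, h2, h3⟩
    · rintro ⟨k, hk, h1, h2, h3⟩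
      exact ⟨⟨k, hk, h1, h2⟩, h3⟩
  rw [cnt, himg, Set.ncard_image_of_injective _ node_inj, hT, ncard_biUnion]
  · exact Finset.sum_congr rfl fun k _ => cnt_pairs _ _ n
  · exact fun k _ => pairsFin _ _ n
  · intro i hi j hj hne
    rw [Set.disjoint_left]
    rintro ⟨C, R⟩ ⟨h1, -, -⟩ ⟨h1', -, -⟩
    exact Set.disjoint_left.mp (hdisj i hi j hj hne) h1 h1'

section Cells

variable (A₁ : PF) (L' : List PF)

/-- the full atom list -/
def Lfull : List PF := PF.node A₁ PF.nil :: L'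

/-- prefix patterns: `Pfun 0 = A₁`, `Pfun k = a₁⋯a_k` for `k ≥ 1` -/
def Pfun : ℕ → PF
  | 0 => A₁
  | k + 1 => concatList ((Lfull A₁ L').take (k + 1))

/-- suffix patterns -/
def Dfun (k : ℕ) : PF := concatList ((Lfull A₁ L').drop k)

noncomputable def cellC (k : ℕ) : Set PF :=
  if k = 0 then Av (Pfun A₁ L' 0)
  else Av (Pfun A₁ L' k) \ Av (Pfun A₁ L' (k - 1))

noncomputable def cellR (k : ℕ) : Set PF :=
  Av (Dfun A₁ L' (if k ≤ 1 then k else k - 1))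

lemma Lfull_atoms (h : ∀ x ∈ L', PF.IsAtom x) : ∀ x ∈ Lfull A₁ L', PF.IsAtom x := by
  intro x hx
  rcases hx with _ | hx
  · exact ⟨A₁, rfl⟩
  · exact h x (by assumption)

lemma Pfun_one : Pfun A₁ L' 1 = PF.node A₁ PF.nil := by
  simp [Pfun, Lfull]

lemma Pfun_succ_contains (k : ℕ) :
    PF.Contains (Pfun A₁ L' (k + 1)) (Pfun A₁ L' k) := by
  cases k with
  | zero =>
    rw [Pfun_one]
    exact Relation.ReflTransGen.head (PF.Del.root A₁ PF.nil) (by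
      show PF.Contains (A₁ ++ PF.nil) A₁
      rw [PF.append_nil]
      exact Relation.ReflTransGen.refl)
  | succ k =>
    show PF.Contains (concatList ((Lfull A₁ L').take (k + 2)))
      (concatList ((Lfull A₁ L').take (k + 1)))
    have : (Lfull A₁ L').take (k + 1) = ((Lfull A₁ L').take (k + 2)).take (k + 1) := by
      rw [List.take_take]
      congr 1
      omega
    rw [this]
    exact contains_concat_take _ _

lemma Pfun_mono {j k : ℕ} (h : j ≤ k) :
    PF.Contains (Pfun A₁ L' k) (Pfun A₁ L' j) := by
  induction k with
  | zero => cases Nat.le_zero.mp h; exact Relation.ReflTransGen.refl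
  | succ k ih =>
    rcases Nat.lt_or_ge j (k + 1) with h' | h'
    · exact ((Pfun_succ_contains A₁ L' k).trans (ih (by omega)))
    · have : j = k + 1 := by omega
      subst this
      exact Relation.ReflTransGen.refl

lemma Av_Pfun_mono {j k : ℕ} (h : j ≤ k) :
    Av (Pfun A₁ L' j) ⊆ Av (Pfun A₁ L' k) := by
  intro X hX hcon
  exact hX (hcon.trans (Pfun_mono A₁ L' h))

lemma Dfun_mono {j k : ℕ} (h : j ≤ k) :
    PF.Contains (Dfun A₁ L' j) (Dfun A₁ L' k) := by
  have : (Lfull A₁ L').drop k = ((Lfull A₁ L').drop j).drop (k - j) := by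
    rw [List.drop_drop]
    congr 1
    omega
  rw [Dfun, Dfun, this]
  exact contains_concat_drop _ _

lemma Pfun_eq_take {j : ℕ} (hj : 1 ≤ j) :
    Pfun A₁ L' j = concatList ((Lfull A₁ L').take j) := by
  cases j with
  | zero => omega
  | succ j => rfl

/-- cover lemma for an increasing chain -/
lemma chain_cover {S : ℕ → Set PF} (hmono : ∀ j k, j ≤ k → S j ⊆ S k) (M : ℕ) {C : PF}
    (hC : C ∈ S M) : ∃ k ≤ M, C ∈ (if k = 0 then S 0 else S k \ S (k - 1)) := by
  induction M with
  | zero => exact ⟨0, le_rfl, by simpa using hC⟩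
  | succ M ih =>
    by_cases hM : C ∈ S M
    · obtain ⟨k, hk, hCk⟩ := ih hM
      exact ⟨k, by omega, hCk⟩
    · exact ⟨M + 1, le_rfl, by simp [hM, hC]⟩

lemma cellC_cover {C : PF} (hC : C ∈ Av (Pfun A₁ L' (L'.length + 1))) :
    ∃ k ∈ Finset.range (L'.length + 2), C ∈ cellC A₁ L' k := by
  obtain ⟨k, hk, hCk⟩ := chain_cover (fun j k h => Av_Pfun_mono A₁ L' h) (L'.length + 1) hC
  exact ⟨k, by simp; omega, by simpa [cellC] using hCk⟩

lemma cellC_disjoint : ∀ i ∈ Finset.range (L'.length + 2), ∀ j ∈ Finset.range (L'.length + 2),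
    i ≠ j → Disjoint (cellC A₁ L' i) (cellC A₁ L' j) := by
  have key : ∀ i j, i < j → Disjoint (cellC A₁ L' i) (cellC A₁ L' j) := by
    intro i j hij
    rw [Set.disjoint_left]
    intro C hCi hCj
    have hiAv : C ∈ Av (Pfun A₁ L' i) := by
      unfold cellC at hCi
      split at hCi
      · simpa [‹i = 0›] using hCi
      · exact hCi.1
    have hj1 : C ∉ Av (Pfun A₁ L' (j - 1)) := by
      unfold cellC at hCj
      rw [if_neg (by omega)] at hCj
      exact hCj.2
    exact hj1 (Av_Pfun_mono A₁ L' (by omega) hiAv)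
  intro i _ j _ hne
  rcases Nat.lt_or_ge i j with h | h
  · exact key i j h
  · exact (key j i (by omega)).symm
end Cells

section Char

variable (A₁ : PF) (L' : List PF)

lemma Dfun_zero : Dfun A₁ L' 0 = concatList (Lfull A₁ L') := by simp [Dfun]

lemma Dfun_one : Dfun A₁ L' 1 = concatList L' := by simp [Dfun, Lfull]

lemma Dfun_last : Dfun A₁ L' (L'.length + 1) = PF.nil := by
  have : (Lfull A₁ L').length = L'.length + 1 := by simp [Lfull]
  simp [Dfun, List.drop_length, ← this]

lemma concat_Lfull : concatList (Lfull A₁ L') = PF.node A₁ (concatList L') := by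
  simp [Lfull]

/-- The key characterization: `node C R` avoids `A` iff `(C, R)` lies in one of the cells. -/
lemma char (hatoms' : ∀ x ∈ L', PF.IsAtom x) (C R : PF) :
    PF.node C R ∈ Av (concatList (Lfull A₁ L')) ↔
      ∃ k ∈ Finset.range (L'.length + 2), C ∈ cellC A₁ L' k ∧ R ∈ cellR A₁ L' k := by
  set m := L'.length + 1 with hm
  have hmlen : (Lfull A₁ L').length = m := by simp [Lfull, hm]
  have step : PF.Contains (PF.node C R) (concatList (Lfull A₁ L')) ↔
      (PF.Contains C A₁ ∧ PF.Contains R (Dfun A₁ L' 1)) ∨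
      (∃ j ≤ m, PF.Contains C (concatList ((Lfull A₁ L').take j)) ∧
        PF.Contains R (Dfun A₁ L' j)) := by
    rw [concat_Lfull, PF.contains_node_iff]
    constructor
    · rintro (⟨h1, h2⟩ | h1)
      · exact Or.inl ⟨h1, by rwa [Dfun_one]⟩
      · rw [← concat_Lfull] at h1
        obtain ⟨j, hj, hC, hR⟩ :=
          (contains_append_concat_iff (Lfull_atoms A₁ L' hatoms') C R).mp h1
        exact Or.inr ⟨j, by omega, hC, hR⟩
    · rintro (⟨h1, h2⟩ | ⟨j, hj, hC, hR⟩)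
      · exact Or.inl ⟨h1, by rwa [Dfun_one] at h2⟩
      · refine Or.inr ?_
        rw [← concat_Lfull]
        exact (contains_append_concat_iff (Lfull_atoms A₁ L' hatoms') C R).mpr
          ⟨j, by omega, hC, hR⟩
  constructor
  · intro h
    have hnc : ¬ PF.Contains (PF.node C R) (concatList (Lfull A₁ L')) := h
    rw [step] at hnc
    push_neg at hnc
    obtain ⟨h1, h2⟩ := hnc
    -- C avoids the full pattern
    have hCA : C ∈ Av (Pfun A₁ L' m) := by
      intro hcon
      rw [Pfun_eq_take A₁ L' (by omega), ← hmlen, List.take_length] at hcon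
      exact h2 m le_rfl (by rwa [← hmlen, List.take_length]) (by rw [Dfun_last]; exact PF.contains_nil R)
    obtain ⟨k, hk, hCk⟩ := cellC_cover A₁ L' hCA
    refine ⟨k, hk, hCk, ?_⟩
    unfold cellR
    rcases Nat.lt_or_ge k 2 with hk2 | hk2
    · interval_cases k
      · -- k = 0
        rw [if_pos (by omega)]
        intro hR
        exact h2 0 (by omega) (by simpa using PF.contains_nil C) hR
      · -- k = 1
        rw [if_pos le_rfl]
        intro hR
        have hCA₁ : PF.Contains C A₁ := by
          by_contra hno
          unfold cellC at hCk
          rw [if_neg one_ne_zero] at hCk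
          exact hCk.2 hno
        exact h1 hCA₁ (by rwa [Dfun_one, ← Dfun_one A₁ L'] at hR)
    · rw [if_neg (by omega)]
      intro hR
      have hCtk : PF.Contains C (concatList ((Lfull A₁ L').take (k - 1))) := by
        unfold cellC at hCk
        rw [if_neg (by omega)] at hCk
        have := hCk.2
        rw [Pfun_eq_take A₁ L' (by omega)] at this
        exact not_not.mp this
      exact h2 (k - 1) (by simp at hk; omega) hCtk hR
  · rintro ⟨k, hk, hCk, hRk⟩
    intro hcon
    rw [step] at hcon
    simp only [Finset.mem_range] at hk
    unfold cellR at hRk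
    rcases hcon with ⟨h1, h2⟩ | ⟨j, hj, hC, hR⟩
    · -- the kept-arch case
      rcases Nat.lt_or_ge k 2 with hk2 | hk2
      · interval_cases k
        · exact (by simpa [cellC, Pfun] using hCk : C ∈ Av A₁) h1
        · exact (by simpa using hRk : R ∈ Av (Dfun A₁ L' 1)) h2
      · rw [if_neg (by omega)] at hRk
        exact hRk ((by rwa [Dfun_one] : PF.Contains R (Dfun A₁ L' 1)).trans
          (Dfun_mono A₁ L' (by omega)))
    · -- the split case
      rcases Nat.eq_zero_or_pos j with rfl | hj1
      · -- j = 0 : R contains everything from index (cell) k onward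
        rcases Nat.lt_or_ge k 2 with hk2 | hk2
        · interval_cases k
          · exact (by simpa using hRk : R ∈ Av (Dfun A₁ L' 0)) hR
          · exact (by simpa using hRk : R ∈ Av (Dfun A₁ L' 1)) (hR.trans (Dfun_mono A₁ L' (by omega)))
        · rw [if_neg (by omega)] at hRk
          exact hRk (hR.trans (Dfun_mono A₁ L' (by omega)))
      · -- j ≥ 1
        have hCj : PF.Contains C (Pfun A₁ L' j) := by
          rwa [Pfun_eq_take A₁ L' hj1]
        rcases Nat.lt_or_ge j k with hjk | hjk
        · -- j < k : R contains Dfun j ⊇ Dfun (k-1)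
          have hkk : k ≥ 2 ∨ k = 1 := by omega
          rcases hkk with hkk | rfl
          · rw [if_neg (by omega)] at hRk
            exact hRk (hR.trans (Dfun_mono A₁ L' (by omega)))
          · rw [if_pos le_rfl] at hRk
            exact hRk (hR.trans (Dfun_mono A₁ L' (by omega)))
        · -- j ≥ k : C contains Pfun j ⊇ Pfun k, contradicting C ∈ Av (Pfun k)
          have hCAv : C ∈ Av (Pfun A₁ L' k) := by
            unfold cellC at hCk
            split at hCk
            · simpa [‹k = 0›] using hCk
            · exact hCk.1
          exact hCAv (hCj.trans (Pfun_mono A₁ L' hjk))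

end Char

lemma cnt_diff_cast (S T : Set PF) (hST : S ⊆ T) (i : ℕ) :
    ((cnt (T \ S) i : ℚ)) = (cnt T i : ℚ) - (cnt S i : ℚ) := by
  have hset : {X | X ∈ T \ S ∧ X.size = i} =
      {X | X ∈ T ∧ X.size = i} \ {X | X ∈ S ∧ X.size = i} := by
    ext X
    simp only [Set.mem_setOf_eq, Set.mem_diff]
    tauto
  have hsub : {X | X ∈ S ∧ X.size = i} ⊆ {X | X ∈ T ∧ X.size = i} :=
    fun X hX => ⟨hST hX.1, hX.2⟩
  rw [cnt, hset, Set.cast_ncard_sdiff hsub (cntFin T i)]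
  rfl

lemma cnt_Av_zero (A : PF) (hA : 1 ≤ A.size) : cnt (Av A) 0 = 1 := by
  have : {X | X ∈ Av A ∧ X.size = 0} = {PF.nil} := by
    ext X
    simp only [Set.mem_setOf_eq, Set.mem_singleton_iff]
    constructor
    · rintro ⟨-, h2⟩
      cases X with
      | nil => rfl
      | node c r => simp [PF.size] at h2
    · rintro rfl
      refine ⟨fun hcon => ?_, rfl⟩
      have := PF.contains_size hcon
      simp [PF.size] at this
      omega
  rw [cnt, this, Set.ncard_singleton]

lemma sum_range_split (M : ℕ) (g : ℕ → ℚ) :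
    ∑ k ∈ Finset.range (M + 2), g k = g 0 + g 1 + ∑ k ∈ Finset.Icc 2 (M + 1), g k := by
  have h : Finset.range (M + 2) = insert 0 (insert 1 (Finset.Icc 2 (M + 1))) := by
    ext x
    simp only [Finset.mem_range, Finset.mem_insert, Finset.mem_Icc]
    omega
  rw [h, Finset.sum_insert (by simp), Finset.sum_insert (by simp)]
  ring

/-- The recursive equation for the generating function of `Av(A)` in terms of the
atom factorisation `A = a₁ a₂ ⋯ a_m` with `a₁` an arch over `A₁`. -/
theorem F_recursion (L : List PF) (A₁ : PF) (hL : L ≠ [])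
    (hatoms : ∀ a ∈ L, a.IsAtom) (hhead : L.head hL = PF.node A₁ PF.nil) :
    PF.F (concatList L) =
      1 + PowerSeries.X * PF.F A₁ * PF.F (concatList L)
        + PowerSeries.X * (PF.F (L.head hL) - PF.F A₁) * PF.F (concatList (L.drop 1))
        + PowerSeries.X * ∑ k ∈ Finset.Icc 2 L.length,
            (PF.F (concatList (L.take k)) - PF.F (concatList (L.take (k - 1)))) *
              PF.F (concatList (L.drop (k - 1))) := by
  obtain ⟨a, L', rfl⟩ : ∃ a t, L = a :: t :=
    ⟨L.head hL, L.tail, (List.cons_head_tail hL).symm⟩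
  simp only [List.head_cons] at hhead ⊢
  subst hhead
  have hatoms' : ∀ x ∈ L', x.IsAtom := fun x hx => hatoms x (List.mem_cons_of_mem _ hx)
  have hmc := master_count (concatList (Lfull A₁ L')) (L'.length + 1)
    (cellC A₁ L') (cellR A₁ L') (char A₁ L' hatoms') (cellC_disjoint A₁ L')
  ext n
  cases n with
  | zero =>
    rw [show (PF.node A₁ PF.nil :: L') = Lfull A₁ L' from rfl]
    rw [coeff_F]
    rw [cnt_Av_zero _ (by rw [concat_Lfull]; simp [PF.size]; omega)]
    simp [PowerSeries.coeff_zero_eq_constantCoeff, map_mul, map_sub, map_sum]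
  | succ n =>
    rw [show (PF.node A₁ PF.nil :: L') = Lfull A₁ L' from rfl]
    rw [coeff_F, hmc n]
    rw [map_add, map_add, map_add, PowerSeries.coeff_one,
      mul_assoc PowerSeries.X (PF.F A₁), PowerSeries.coeff_succ_X_mul,
      mul_assoc PowerSeries.X (PF.F (PF.node A₁ PF.nil) - PF.F A₁),
      PowerSeries.coeff_succ_X_mul, PowerSeries.coeff_succ_X_mul]
    push_cast
    rw [sum_range_split]
    have h0 : (∑ ij ∈ Finset.HasAntidiagonal.antidiagonal n,
        (cnt (cellC A₁ L' 0) ij.1 : ℚ) * (cnt (cellR A₁ L' 0) ij.2 : ℚ)) =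
        PowerSeries.coeff n (PF.F A₁ * PF.F (concatList (Lfull A₁ L'))) := by
      rw [PowerSeries.coeff_mul]
      refine Finset.sum_congr rfl fun ij _ => ?_
      have e1 : cellC A₁ L' 0 = Av A₁ := by simp [cellC, Pfun]
      have e2 : cellR A₁ L' 0 = Av (concatList (Lfull A₁ L')) := by simp [cellR, Dfun_zero]
      rw [e1, e2, coeff_F, coeff_F]
    have h1 : (∑ ij ∈ Finset.HasAntidiagonal.antidiagonal n,
        (cnt (cellC A₁ L' 1) ij.1 : ℚ) * (cnt (cellR A₁ L' 1) ij.2 : ℚ)) =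
        PowerSeries.coeff n
          ((PF.F (PF.node A₁ PF.nil) - PF.F A₁) *
            PF.F (concatList ((Lfull A₁ L').drop 1))) := by
      rw [PowerSeries.coeff_mul]
      refine Finset.sum_congr rfl fun ij _ => ?_
      have hc : (cnt (cellC A₁ L' 1) ij.1 : ℚ) =
          PowerSeries.coeff ij.1 (PF.F (PF.node A₁ PF.nil) - PF.F A₁) := by
        rw [map_sub, coeff_F, coeff_F]
        have : cellC A₁ L' 1 = Av (Pfun A₁ L' 1) \ Av (Pfun A₁ L' 0) := by
          simp [cellC]
        rw [this, cnt_diff_cast _ _ (Av_Pfun_mono A₁ L' (by omega)), Pfun_one]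
        rfl
      have hr : (cnt (cellR A₁ L' 1) ij.2 : ℚ) =
          PowerSeries.coeff ij.2 (PF.F (concatList ((Lfull A₁ L').drop 1))) := by
        rw [coeff_F]
        rfl
      rw [hc, hr]
    have h2 : (∑ k ∈ Finset.Icc 2 (L'.length + 1), ∑ ij ∈ Finset.HasAntidiagonal.antidiagonal n,
        (cnt (cellC A₁ L' k) ij.1 : ℚ) * (cnt (cellR A₁ L' k) ij.2 : ℚ)) =
        PowerSeries.coeff n (∑ k ∈ Finset.Icc 2 (Lfull A₁ L').length,
          (PF.F (concatList ((Lfull A₁ L').take k)) -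
            PF.F (concatList ((Lfull A₁ L').take (k - 1)))) *
          PF.F (concatList ((Lfull A₁ L').drop (k - 1)))) := by
      rw [map_sum]
      rw [show (Lfull A₁ L').length = L'.length + 1 by simp [Lfull]]
      refine Finset.sum_congr rfl fun k hk => ?_
      simp only [Finset.mem_Icc] at hk
      rw [PowerSeries.coeff_mul]
      refine Finset.sum_congr rfl fun ij _ => ?_
      have hc : (cnt (cellC A₁ L' k) ij.1 : ℚ) =
          PowerSeries.coeff ij.1 (PF.F (concatList ((Lfull A₁ L').take k)) -
            PF.F (concatList ((Lfull A₁ L').take (k - 1)))) := by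
        rw [map_sub, coeff_F, coeff_F]
        have hck : cellC A₁ L' k = Av (Pfun A₁ L' k) \ Av (Pfun A₁ L' (k - 1)) := by
          rw [cellC, if_neg (by omega)]
        rw [hck, cnt_diff_cast _ _ (Av_Pfun_mono A₁ L' (by omega)),
          Pfun_eq_take A₁ L' (by omega), Pfun_eq_take A₁ L' (by omega)]
      have hr : (cnt (cellR A₁ L' k) ij.2 : ℚ) =
          PowerSeries.coeff ij.2 (PF.F (concatList ((Lfull A₁ L').drop (k - 1)))) := by
        rw [coeff_F]
        have e3 : cellR A₁ L' k = Av (concatList ((Lfull A₁ L').drop (k - 1))) := by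
          rw [cellR, if_neg (by omega)]
          rfl
        rw [e3]
      rw [hc, hr]
    rw [h0, h1, h2]
    ring
end

section
/- For every arch system A, the generating function of the class Av(A) of arch systems avoiding A is a rational function. -/
namespace PFAux

open PF

@[simp] lemma nil_append (q : PF) : (PF.nil ++ q) = q := rfl
@[simp] lemma node_append (c r q : PF) : ((PF.node c r) ++ q) = PF.node c (r ++ q) := rfl

@[simp] lemma append_nil (p : PF) : p ++ PF.nil = p := by
  induction p with
  | nil => rfl
  | node c r ih1 ih2 => simp [ih2]

lemma append_assoc (p q s : PF) : p ++ q ++ s = p ++ (q ++ s) := by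
  induction p with
  | nil => rfl
  | node c r ih1 ih2 => simp [ih2]

@[simp] lemma size_nil : (PF.nil).size = 0 := rfl
@[simp] lemma size_node (c r : PF) : (PF.node c r).size = 1 + c.size + r.size := rfl

@[simp] lemma size_append (p q : PF) : (p ++ q).size = p.size + q.size := by
  induction p with
  | nil => simp
  | node c r ih1 ih2 => simp [ih2]; omega

lemma size_eq_zero {p : PF} (h : p.size = 0) : p = PF.nil := by
  cases p with
  | nil => rfl
  | node c r => simp at h

/-- the minor relation: `Minor A X` means `A` can be obtained from `X` by deleting arches -/
inductive Minor : PF → PF → Prop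
  | nil (X : PF) : Minor PF.nil X
  | root {a₁ a₂ c r : PF} : Minor a₁ c → Minor a₂ r → Minor (PF.node a₁ a₂) (PF.node c r)
  | skip {A c r : PF} : Minor A (c ++ r) → Minor A (PF.node c r)

lemma Minor.refl : ∀ A : PF, Minor A A
  | PF.nil => Minor.nil _
  | PF.node c r => Minor.root (Minor.refl c) (Minor.refl r)

lemma minor_nil (A : PF) (h : Minor A PF.nil) : A = PF.nil := by
  cases h with
  | nil => rfl

lemma minor_pad_left (Q : PF) (Y Z : PF) (h : Minor Q Z) : Minor Q (Y ++ Z) := by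
  have H : ∀ n (Y : PF), Y.size ≤ n → ∀ Z, Minor Q Z → Minor Q (Y ++ Z) := by
    intro n
    induction n with
    | zero =>
      intro Y hY Z h
      rw [size_eq_zero (Nat.le_zero.mp hY)]
      simpa using h
    | succ n ih =>
      intro Y hY Z h
      cases Y with
      | nil => simpa using h
      | node c r =>
        simp at hY
        apply Minor.skip
        exact ih c (by omega) _ (ih r (by omega) Z h)
  exact H Y.size Y le_rfl Z h

lemma minor_append {P Q Y Z : PF} (h1 : Minor P Y) (h2 : Minor Q Z) :
    Minor (P ++ Q) (Y ++ Z) := by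
  induction h1 with
  | nil X => exact minor_pad_left _ _ _ h2
  | root ha hb iha ihb => exact Minor.root ha ihb
  | skip h ih =>
    rename_i A c r
    simp only [node_append]
    apply Minor.skip
    rw [← append_assoc]
    exact ih

lemma minor_pad_right (P Q : PF) : Minor P (P ++ Q) := by
  have := minor_append (Minor.refl P) (Minor.nil Q)
  simpa using this

lemma minor_split (Y P Z : PF) (h : Minor P (Y ++ Z)) :
    ∃ P₁ P₂, P = P₁ ++ P₂ ∧ Minor P₁ Y ∧ Minor P₂ Z := by
  have H : ∀ n (Y : PF), Y.size ≤ n → ∀ P Z, Minor P (Y ++ Z) →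
      ∃ P₁ P₂, P = P₁ ++ P₂ ∧ Minor P₁ Y ∧ Minor P₂ Z := by
    intro n
    induction n with
    | zero =>
      intro Y hY P Z h
      rw [size_eq_zero (Nat.le_zero.mp hY)] at h ⊢
      exact ⟨PF.nil, P, rfl, Minor.nil _, by simpa using h⟩
    | succ n ih =>
      intro Y hY P Z h
      cases Y with
      | nil => exact ⟨PF.nil, P, rfl, Minor.nil _, by simpa using h⟩
      | node y₁ y₂ =>
        simp at hY
        simp only [node_append] at h
        cases h with
        | nil => exact ⟨PF.nil, PF.nil, rfl, Minor.nil _, Minor.nil _⟩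
        | root hc hr =>
          rename_i p₁ p₂
          obtain ⟨Q₁, Q₂, hq, hq1, hq2⟩ := ih y₂ (by omega) p₂ Z hr
          exact ⟨PF.node p₁ Q₁, Q₂, by simp [hq], Minor.root hc hq1, hq2⟩
        | skip h =>
          rw [← append_assoc] at h
          obtain ⟨Q₁, Q₂, hq, hq1, hq2⟩ := ih (y₁ ++ y₂) (by simp; omega) P Z h
          exact ⟨Q₁, Q₂, hq, Minor.skip hq1, hq2⟩
  exact H Y.size Y le_rfl P Z h

lemma Minor.trans : ∀ {A B C : PF}, Minor A B → Minor B C → Minor A C := by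
  intro A B C hab hbc
  induction hbc generalizing A with
  | nil X =>
    rw [minor_nil _ hab]; exact Minor.nil _
  | root hc hr ihc ihr =>
    rename_i b₁ b₂ c r
    cases hab with
    | nil => exact Minor.nil _
    | root h1 h2 => exact Minor.root (ihc h1) (ihr h2)
    | skip h =>
      obtain ⟨P₁, P₂, rfl, h1, h2⟩ := minor_split b₁ _ b₂ h
      exact Minor.skip (minor_append (ihc h1) (ihr h2))
  | skip h ih => exact Minor.skip (ih hab)

lemma del_minor {X Y : PF} (h : Del X Y) : Minor Y X := by
  induction h with
  | root c r => exact Minor.skip (Minor.refl _)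
  | inside r h ih => exact Minor.root ih (Minor.refl _)
  | rest c h ih => exact Minor.root (Minor.refl _) ih

lemma contains_nil (X : PF) : Contains X PF.nil := by
  have H : ∀ n (X : PF), X.size ≤ n → Contains X PF.nil := by
    intro n
    induction n with
    | zero =>
      intro X hX
      rw [size_eq_zero (Nat.le_zero.mp hX)]
      exact Relation.ReflTransGen.refl
    | succ n ih =>
      intro X hX
      cases X with
      | nil => exact Relation.ReflTransGen.refl
      | node c r =>
        simp at hX
        exact Relation.ReflTransGen.head (Del.root c r) (ih _ (by simp; omega))
  exact H X.size X le_rfl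

lemma contains_inside {c c' : PF} (r : PF) (h : Contains c c') :
    Contains (PF.node c r) (PF.node c' r) :=
  Relation.ReflTransGen.lift (fun x => PF.node x r) (fun _ _ hd => Del.inside r hd) _ _ h

lemma contains_rest {r r' : PF} (c : PF) (h : Contains r r') :
    Contains (PF.node c r) (PF.node c r') :=
  Relation.ReflTransGen.lift (fun x => PF.node c x) (fun _ _ hd => Del.rest c hd) _ _ h

lemma contains_iff_minor (X A : PF) : Contains X A ↔ Minor A X := by
  constructor
  · intro h
    induction h with
    | refl => exact Minor.refl _
    | tail hstep hd ih => exact Minor.trans (del_minor hd) ih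
  · intro h
    induction h with
    | nil X => exact contains_nil X
    | root hc hr ihc ihr =>
      exact Relation.ReflTransGen.trans (contains_inside _ ihc) (contains_rest _ ihr)
    | skip h ih =>
      exact Relation.ReflTransGen.head (Del.root _ _) ih



/-- number of top-level trees -/
def numT : PF → ℕ
  | PF.nil => 0
  | PF.node _ r => numT r + 1

/-- take the first `k` top-level trees -/
def takeT : ℕ → PF → PF
  | 0, _ => PF.nil
  | _+1, PF.nil => PF.nil
  | k+1, PF.node c r => PF.node c (takeT k r)

/-- drop the first `k` top-level trees -/
def dropT : ℕ → PF → PF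
  | 0, B => B
  | _+1, PF.nil => PF.nil
  | k+1, PF.node _ r => dropT k r

/-- subpattern scale: `pat B 0 = nil`, `pat B 1` = content of the first tree,
`pat B k` (k ≥ 2) = first `k` trees of `B`. -/
def pat : PF → ℕ → PF
  | _, 0 => PF.nil
  | PF.nil, 1 => PF.nil
  | PF.node c _, 1 => c
  | B, (k+2) => takeT (k+2) B

@[simp] lemma numT_nil : numT PF.nil = 0 := rfl
@[simp] lemma numT_node (c r : PF) : numT (PF.node c r) = numT r + 1 := rfl
@[simp] lemma dropT_zero (B : PF) : dropT 0 B = B := rfl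
@[simp] lemma takeT_zero (B : PF) : takeT 0 B = PF.nil := rfl
@[simp] lemma pat_zero (B : PF) : pat B 0 = PF.nil := by cases B <;> rfl
@[simp] lemma pat_one_node (c r : PF) : pat (PF.node c r) 1 = c := rfl

lemma takeT_append_dropT : ∀ (k : ℕ) (B : PF), takeT k B ++ dropT k B = B := by
  intro k
  induction k with
  | zero => intro B; simp
  | succ k ih =>
    intro B
    cases B with
    | nil => rfl
    | node c r => simp [takeT, dropT, ih r]

lemma takeT_all : ∀ (B : PF) (k : ℕ), numT B ≤ k → takeT k B = B := by
  intro B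
  induction B with
  | nil => intro k _; cases k <;> rfl
  | node c r ih1 ih2 =>
    intro k hk
    cases k with
    | zero => simp at hk
    | succ k =>
      simp at hk
      simp [takeT, ih2 k (by omega)]

lemma dropT_numT : ∀ (B : PF), dropT (numT B) B = PF.nil := by
  intro B
  induction B with
  | nil => rfl
  | node c r ih1 ih2 => simpa [numT, dropT] using ih2

lemma numT_append_left : ∀ (P Q : PF), takeT (numT P) (P ++ Q) = P ∧ dropT (numT P) (P ++ Q) = Q := by
  intro P
  induction P with
  | nil => intro Q; simp
  | node c r ih1 ih2 =>
    intro Q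
    constructor
    · show PF.node c (takeT (numT r) (r ++ Q)) = PF.node c r
      rw [(ih2 Q).1]
    · show dropT (numT r) (r ++ Q) = Q
      exact (ih2 Q).2

lemma pat_eq_takeT (B : PF) (k : ℕ) (hk : 2 ≤ k) : pat B k = takeT k B := by
  match k, hk with
  | (k+2), _ => cases B <;> rfl

lemma pat_numT (B : PF) (h : 2 ≤ numT B) : pat B (numT B) = B := by
  rw [pat_eq_takeT B _ h, takeT_all B _ le_rfl]

/-- the content of the first tree is a minor of the first tree -/
lemma minor_pat_one_takeT_one (B : PF) : Minor (pat B 1) (takeT 1 B) := by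
  cases B with
  | nil => exact Minor.nil _
  | node c r =>
    show Minor c (PF.node c (takeT 0 r))
    apply Minor.skip
    simpa using Minor.refl c

lemma takeT_minor_succ : ∀ (k : ℕ) (B : PF), Minor (takeT k B) (takeT (k+1) B) := by
  intro k
  induction k with
  | zero => intro B; exact Minor.nil _
  | succ k ih =>
    intro B
    cases B with
    | nil => exact Minor.nil _
    | node c r => exact Minor.root (Minor.refl c) (ih r)

lemma minor_pat_takeT (B : PF) (k : ℕ) : Minor (pat B k) (takeT k B) := by
  match k with
  | 0 => rw [pat_zero]; exact Minor.nil _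
  | 1 => exact minor_pat_one_takeT_one B
  | (k+2) => rw [pat_eq_takeT B (k+2) (by omega)]; exact Minor.refl _

lemma minor_pat_succ (B : PF) (k : ℕ) : Minor (pat B k) (pat B (k+1)) := by
  match k with
  | 0 => rw [pat_zero]; exact Minor.nil _
  | 1 =>
    rw [pat_eq_takeT B (1+1) (by norm_num)]
    exact Minor.trans (minor_pat_one_takeT_one B) (takeT_minor_succ 1 B)
  | (k+2) =>
    rw [pat_eq_takeT B (k+2) (by omega), pat_eq_takeT B (k+2+1) (by omega)]
    exact takeT_minor_succ _ B

lemma minor_pat_mono (B : PF) {a b : ℕ} (h : a ≤ b) : Minor (pat B a) (pat B b) := by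
  induction b with
  | zero =>
    have : a = 0 := by omega
    subst this; exact Minor.refl _
  | succ b ih =>
    rcases Nat.lt_or_ge a (b+1) with h' | h'
    · exact Minor.trans (ih (by omega)) (minor_pat_succ B b)
    · have : a = b + 1 := by omega
      rw [this]; exact Minor.refl _

lemma minor_dropT_succ : ∀ (k : ℕ) (B : PF), Minor (dropT (k+1) B) (dropT k B) := by
  intro k
  induction k with
  | zero =>
    intro B
    cases B with
    | nil => exact Minor.refl _
    | node c r =>
      show Minor r (PF.node c r)
      exact Minor.skip (minor_pad_left r c r (Minor.refl r))
  | succ k ih =>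
    intro B
    cases B with
    | nil => exact Minor.refl _
    | node c r => exact ih r

lemma minor_dropT_mono (B : PF) {a b : ℕ} (h : a ≤ b) : Minor (dropT b B) (dropT a B) := by
  induction b with
  | zero =>
    have : a = 0 := by omega
    subst this; exact Minor.refl _
  | succ b ih =>
    rcases Nat.lt_or_ge a (b+1) with h' | h'
    · exact Minor.trans (minor_dropT_succ b B) (ih (by omega))
    · have : a = b + 1 := by omega
      rw [this]; exact Minor.refl _

lemma numT_append : ∀ (P Q : PF), numT (P ++ Q) = numT P + numT Q := by
  intro P
  induction P with
  | nil => intro Q; simp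
  | node c r ih1 ih2 => intro Q; simp [ih2]; omega

/-- KEY decomposition lemma -/
lemma minor_node_iff (B c r : PF) :
    Minor B (PF.node c r) ↔ ∃ δ, δ ≤ numT B ∧ Minor (pat B δ) c ∧ Minor (dropT δ B) r := by
  constructor
  · intro h
    cases h with
    | nil =>
      exact ⟨0, by simp, Minor.nil _, Minor.nil _⟩
    | root h1 h2 =>
      rename_i a₁ a₂
      exact ⟨1, by simp [numT], by simpa using h1, by simpa [dropT] using h2⟩
    | skip h =>
      obtain ⟨P₁, P₂, hB, h1, h2⟩ := minor_split c B r h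
      refine ⟨numT P₁, ?_, ?_, ?_⟩
      · rw [hB, numT_append]; omega
      · have ht : takeT (numT P₁) B = P₁ := by rw [hB]; exact (numT_append_left P₁ P₂).1
        refine Minor.trans (minor_pat_takeT B (numT P₁)) ?_
        rw [ht]; exact h1
      · have hd : dropT (numT P₁) B = P₂ := by rw [hB]; exact (numT_append_left P₁ P₂).2
        rw [hd]; exact h2
  · rintro ⟨δ, hδ, h1, h2⟩
    match δ with
    | 0 =>
      simp at h1 h2 ⊢
      exact Minor.skip (minor_pad_left B c r h2)
    | 1 =>
      cases B with
      | nil => simp [numT] at hδ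
      | node b₁ b₂ =>
        simp [pat, dropT] at h1 h2
        exact Minor.root h1 h2
    | (k+2) =>
      rw [pat_eq_takeT B _ (by omega)] at h1
      have : Minor (takeT (k+2) B ++ dropT (k+2) B) (c ++ r) := minor_append h1 h2
      rw [takeT_append_dropT] at this
      exact Minor.skip this

-- size lemmas
lemma size_takeT_le : ∀ (k : ℕ) (B : PF), (takeT k B).size ≤ B.size := by
  intro k
  induction k with
  | zero => intro B; simp
  | succ k ih =>
    intro B
    cases B with
    | nil => simp [takeT]
    | node c r => simp [takeT]; have := ih r; omega

lemma size_takeT_lt : ∀ (k : ℕ) (B : PF), k < numT B → (takeT k B).size < B.size := by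
  intro k
  induction k with
  | zero =>
    intro B hB
    cases B with
    | nil => simp at hB
    | node c r => simp
  | succ k ih =>
    intro B hB
    cases B with
    | nil => simp at hB
    | node c r =>
      simp [numT] at hB
      have := ih r (by omega)
      simp [takeT]; omega

lemma size_dropT_le : ∀ (k : ℕ) (B : PF), (dropT k B).size ≤ B.size := by
  intro k
  induction k with
  | zero => intro B; simp
  | succ k ih =>
    intro B
    cases B with
    | nil => simp [dropT]
    | node c r => simp [dropT]; have := ih r; omega

lemma size_dropT_lt (k : ℕ) (B : PF) (hk : 1 ≤ k) (hB : B ≠ PF.nil) :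
    (dropT k B).size < B.size := by
  match k, hk with
  | (k+1), _ =>
    cases B with
    | nil => exact absurd rfl hB
    | node c r =>
      show (dropT k r).size < (PF.node c r).size
      have := size_dropT_le k r
      simp; omega

lemma size_pat_lt (B : PF) (d : ℕ) (hB : B ≠ PF.nil) (h : d = 1 ∨ d < numT B) :
    (pat B d).size < B.size := by
  match d with
  | 0 =>
    cases B with
    | nil => exact absurd rfl hB
    | node c r => simp
  | 1 =>
    cases B with
    | nil => exact absurd rfl hB
    | node c r => simp; omega
  | (k+2) =>
    rw [pat_eq_takeT B _ (by omega)]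
    rcases h with h | h
    · omega
    · exact size_takeT_lt _ B h

lemma numT_pos (B : PF) (hB : B ≠ PF.nil) : 1 ≤ numT B := by
  cases B with
  | nil => exact absurd rfl hB
  | node c r => simp



/-- all arch systems of size at most `n` -/
def allPFle : ℕ → Finset PF
  | 0 => {PF.nil}
  | n + 1 =>
    {PF.nil} ∪ (Finset.image₂ PF.node (allPFle n) (allPFle n)).filter
      (fun X => X.size ≤ n + 1)

lemma node_injective2 : Function.Injective2 PF.node := by
  intro a b c d h
  injection h with h1 h2
  exact ⟨h1, h2⟩

lemma mem_allPFle : ∀ (n : ℕ) (X : PF), X ∈ allPFle n ↔ X.size ≤ n := by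
  intro n
  induction n with
  | zero =>
    intro X
    simp only [allPFle, Finset.mem_singleton]
    constructor
    · rintro rfl; simp
    · intro h; exact size_eq_zero (Nat.le_zero.mp h)
  | succ n ih =>
    intro X
    simp only [allPFle, Finset.mem_union, Finset.mem_singleton, Finset.mem_filter,
      Finset.mem_image₂]
    constructor
    · rintro (rfl | ⟨⟨c, hc, r, hr, rfl⟩, hs⟩)
      · simp
      · exact hs
    · intro h
      cases X with
      | nil => left; rfl
      | node c r =>
        right
        simp only [size_node] at h
        refine ⟨⟨c, (ih c).mpr (by omega), r, (ih r).mpr (by omega), rfl⟩, by simp; omega⟩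

/-- all arch systems of size exactly `n` -/
def allPF (n : ℕ) : Finset PF := (allPFle n).filter (fun X => X.size = n)

lemma mem_allPF (n : ℕ) (X : PF) : X ∈ allPF n ↔ X.size = n := by
  simp only [allPF, Finset.mem_filter, mem_allPFle]
  constructor
  · exact fun h => h.2
  · intro h; exact ⟨le_of_eq h, h⟩

open scoped Classical in
/-- number of arch systems of size `n` avoiding (not containing as minor) `B` -/
noncomputable def cnt (B : PF) (n : ℕ) : ℕ :=
  ((allPF n).filter (fun X => ¬ Minor B X)).card

open scoped Classical in
lemma cnt_nil (n : ℕ) : cnt PF.nil n = 0 := by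
  rw [cnt, Finset.card_eq_zero, Finset.filter_eq_empty_iff]
  intro X _
  simp only [not_not]
  exact Minor.nil X

open scoped Classical in
lemma cnt_zero (B : PF) (hB : B ≠ PF.nil) : cnt B 0 = 1 := by
  rw [cnt]
  have h0 : allPF 0 = {PF.nil} := by
    ext X
    simp [mem_allPF, Finset.mem_singleton]
    constructor
    · exact size_eq_zero
    · rintro rfl; rfl
  rw [h0, Finset.filter_singleton, if_pos (fun h => hB (minor_nil B h))]
  rfl

open scoped Classical in
/-- the main counting recursion -/
lemma cnt_succ (B : PF) (hB : B ≠ PF.nil) (n : ℕ) :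
    cnt B (n+1) = ∑ q ∈ (Finset.range (numT B)) ×ˢ (Finset.range (n+1)),
      ((allPF q.2).filter
        (fun c => Minor (pat B q.1) c ∧ ¬ Minor (pat B (q.1+1)) c)).card
        * cnt (dropT q.1 B) (n - q.2) := by
  have hset : (allPF (n+1)).filter (fun X => ¬ Minor B X)
      = ((Finset.range (numT B)) ×ˢ (Finset.range (n+1))).biUnion (fun q =>
          Finset.image₂ PF.node
            ((allPF q.2).filter
              (fun c => Minor (pat B q.1) c ∧ ¬ Minor (pat B (q.1+1)) c))
            ((allPF (n - q.2)).filter (fun r => ¬ Minor (dropT q.1 B) r))) := by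
    ext X
    simp only [Finset.mem_filter, Finset.mem_biUnion, Finset.mem_product,
      Finset.mem_range, Finset.mem_image₂, mem_allPF]
    constructor
    · rintro ⟨hsize, hav⟩
      cases X with
      | nil => simp at hsize
      | node c r =>
        have hP0 : Minor (pat B 0) c := by rw [pat_zero]; exact Minor.nil c
        set P : ℕ → Prop := fun δ => Minor (pat B δ) c with hPdef
        set δs := Nat.findGreatest P (numT B) with hδs
        have hPδ : P δs := Nat.findGreatest_spec (Nat.zero_le _) hP0
        have hlt : δs < numT B := by
          rcases Nat.lt_or_ge δs (numT B) with h | h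
          · exact h
          · exfalso
            have heq : δs = numT B := le_antisymm (Nat.findGreatest_le _) h
            apply hav
            rw [minor_node_iff]
            refine ⟨numT B, le_rfl, by rw [← heq]; exact hPδ, ?_⟩
            rw [dropT_numT]
            exact Minor.nil r
        have hnext : ¬ P (δs + 1) :=
          Nat.findGreatest_is_greatest (Nat.lt_succ_self _) hlt
        have hr : ¬ Minor (dropT δs B) r := by
          intro h
          exact hav ((minor_node_iff B c r).mpr ⟨δs, le_of_lt hlt, hPδ, h⟩)
        simp only [size_node] at hsize
        refine ⟨(δs, c.size), ⟨hlt, by omega⟩, c, ⟨rfl, hPδ, hnext⟩, r, ⟨?_, hr⟩, rfl⟩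
        show r.size = n - c.size
        omega
    · rintro ⟨⟨δ, m⟩, ⟨hδ, hm⟩, c, ⟨hcs, hc1, hc2⟩, r, ⟨hrs, hrav⟩, rfl⟩
      simp only at hcs hc1 hc2 hrs hrav
      constructor
      · simp only [size_node]; omega
      · intro h
        rw [minor_node_iff] at h
        obtain ⟨δ', hδ', h1, h2⟩ := h
        rcases le_or_gt δ' δ with hle | hgt
        · exact hrav (Minor.trans (minor_dropT_mono B hle) h2)
        · exact hc2 (Minor.trans (minor_pat_mono B hgt) h1)
  rw [cnt, hset, Finset.card_biUnion]
  · apply Finset.sum_congr rfl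
    intro q _
    rw [Finset.card_image₂ node_injective2, cnt]
  · rintro ⟨δ, m⟩ hq ⟨δ', m'⟩ hq' hne
    rw [Function.onFun, Finset.disjoint_left]
    rintro X hX hX'
    simp only [Finset.mem_image₂, Finset.mem_filter, mem_allPF] at hX hX'
    obtain ⟨c, ⟨hcs, hc1, hc2⟩, r, ⟨hrs, hrav⟩, hXeq⟩ := hX
    obtain ⟨c', ⟨hcs', hc1', hc2'⟩, r', ⟨hrs', hrav'⟩, hXeq'⟩ := hX'
    rw [← hXeq'] at hXeq
    obtain ⟨rfl, rfl⟩ := node_injective2 hXeq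
    apply hne
    have hδδ : δ = δ' := by
      by_contra hdd
      rcases Nat.lt_or_ge δ δ' with h | h
      · exact hc2 (Minor.trans (minor_pat_mono B h) hc1')
      · have h' : δ' < δ := by omega
        exact hc2' (Minor.trans (minor_pat_mono B h') hc1)
    have hmm : m = m' := by rw [← hcs, ← hcs']
    rw [hδδ, hmm]

open scoped Classical in
/-- splitting count: exact-δ class cardinality -/
lemma cnt_split (B : PF) (δ m : ℕ) :
    ((allPF m).filter (fun c => Minor (pat B δ) c ∧ ¬ Minor (pat B (δ+1)) c)).card
      + cnt (pat B δ) m = cnt (pat B (δ+1)) m := by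
  classical
  have himp : ∀ c : PF, Minor (pat B (δ+1)) c → Minor (pat B δ) c :=
    fun c h => Minor.trans (minor_pat_succ B δ) h
  have e1 : (allPF m).filter (fun c => Minor (pat B δ) c ∧ ¬ Minor (pat B (δ+1)) c)
      = ((allPF m).filter (fun c => ¬ Minor (pat B (δ+1)) c)).filter
          (fun c => Minor (pat B δ) c) := by
    ext c
    simp only [Finset.mem_filter]
    tauto
  have e2 : (allPF m).filter (fun X => ¬ Minor (pat B δ) X)
      = ((allPF m).filter (fun c => ¬ Minor (pat B (δ+1)) c)).filter
          (fun c => ¬ Minor (pat B δ) c) := by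
    ext c
    simp only [Finset.mem_filter]
    have := himp c
    tauto
  rw [cnt, cnt, e1, e2]
  exact Finset.card_filter_add_card_filter_not _



/-- the generating function of the avoidance class of `B` -/
noncomputable def Fv (B : PF) : PowerSeries ℚ := PowerSeries.mk fun n => (cnt B n : ℚ)

lemma Fv_nil : Fv PF.nil = 0 := by
  ext n
  simp [Fv, PowerSeries.coeff_mk, cnt_nil]

open scoped Classical in
/-- the main power series identity -/
lemma Fv_eq (B : PF) (hB : B ≠ PF.nil) :
    Fv B = 1 + PowerSeries.X * ∑ δ ∈ Finset.range (numT B),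
      (Fv (pat B (δ+1)) - Fv (pat B δ)) * Fv (dropT δ B) := by
  ext n
  rcases n with _ | n
  · rw [Fv, PowerSeries.coeff_mk, cnt_zero B hB]
    rw [map_add, PowerSeries.coeff_zero_eq_constantCoeff, map_mul]
    simp
  · rw [Fv, PowerSeries.coeff_mk, map_add, PowerSeries.coeff_one,
      if_neg (Nat.succ_ne_zero n), zero_add, PowerSeries.coeff_succ_X_mul, map_sum]
    have hterm : ∀ δ, (PowerSeries.coeff n)
        ((Fv (pat B (δ+1)) - Fv (pat B δ)) * Fv (dropT δ B))
        = ∑ m ∈ Finset.range (n+1),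
            (((cnt (pat B (δ+1)) m : ℚ) - (cnt (pat B δ) m : ℚ)) * (cnt (dropT δ B) (n - m) : ℚ)) := by
      intro δ
      rw [PowerSeries.coeff_mul, Finset.Nat.sum_antidiagonal_eq_sum_range_succ_mk]
      apply Finset.sum_congr rfl
      intro m _
      rw [map_sub]
      simp [Fv, PowerSeries.coeff_mk]
    rw [cnt_succ B hB n, Nat.cast_sum, Finset.sum_product]
    apply Finset.sum_congr rfl
    intro δ _
    rw [hterm δ]
    apply Finset.sum_congr rfl
    intro m _
    have hs := cnt_split B δ m
    have hc : ((((allPF m).filter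
        (fun c => Minor (pat B δ) c ∧ ¬ Minor (pat B (δ+1)) c)).card : ℚ))
        = (cnt (pat B (δ+1)) m : ℚ) - (cnt (pat B δ) m : ℚ) := by
      have := congrArg (fun k : ℕ => (k : ℚ)) hs
      push_cast at this
      linarith
    rw [Nat.cast_mul]
    show ((((allPF m).filter
        (fun c => Minor (pat B δ) c ∧ ¬ Minor (pat B (δ+1)) c)).card : ℚ))
        * (cnt (dropT δ B) (n - m) : ℚ) = _
    rw [hc]

/-- rationality of a power series -/
def IsRat (f : PowerSeries ℚ) : Prop :=
  ∃ p q : Polynomial ℚ, q.coeff 0 ≠ 0 ∧ (q : PowerSeries ℚ) * f = p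

lemma isRat_poly (p : Polynomial ℚ) : IsRat (p : PowerSeries ℚ) :=
  ⟨p, 1, by simp, by rw [Polynomial.coe_one, one_mul]⟩

lemma isRat_zero : IsRat 0 := by
  have := isRat_poly 0
  simpa using this

lemma isRat_one : IsRat 1 := by
  have := isRat_poly 1
  simpa [Polynomial.coe_one] using this

lemma isRat_X : IsRat PowerSeries.X := by
  have := isRat_poly Polynomial.X
  simpa [Polynomial.coe_X] using this

lemma isRat_mul {f g : PowerSeries ℚ} (hf : IsRat f) (hg : IsRat g) : IsRat (f * g) := by
  obtain ⟨pf, qf, hf0, hfe⟩ := hf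
  obtain ⟨pg, qg, hg0, hge⟩ := hg
  refine ⟨pf * pg, qf * qg, ?_, ?_⟩
  · rw [Polynomial.mul_coeff_zero]
    exact mul_ne_zero hf0 hg0
  · rw [Polynomial.coe_mul, Polynomial.coe_mul]
    calc (qf : PowerSeries ℚ) * qg * (f * g) = ((qf : PowerSeries ℚ) * f) * ((qg : PowerSeries ℚ) * g) := by ring
    _ = (pf : PowerSeries ℚ) * pg := by rw [hfe, hge]

lemma isRat_add {f g : PowerSeries ℚ} (hf : IsRat f) (hg : IsRat g) : IsRat (f + g) := by
  obtain ⟨pf, qf, hf0, hfe⟩ := hf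
  obtain ⟨pg, qg, hg0, hge⟩ := hg
  refine ⟨pf * qg + pg * qf, qf * qg, ?_, ?_⟩
  · rw [Polynomial.mul_coeff_zero]
    exact mul_ne_zero hf0 hg0
  · rw [Polynomial.coe_mul, Polynomial.coe_add, Polynomial.coe_mul, Polynomial.coe_mul]
    calc (qf : PowerSeries ℚ) * qg * (f + g)
        = ((qf : PowerSeries ℚ) * f) * qg + ((qg : PowerSeries ℚ) * g) * qf := by ring
    _ = (pf : PowerSeries ℚ) * qg + (pg : PowerSeries ℚ) * qf := by rw [hfe, hge]

lemma isRat_neg {f : PowerSeries ℚ} (hf : IsRat f) : IsRat (-f) := by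
  obtain ⟨pf, qf, hf0, hfe⟩ := hf
  exact ⟨-pf, qf, hf0, by rw [Polynomial.coe_neg, mul_neg, hfe]⟩

lemma isRat_sub {f g : PowerSeries ℚ} (hf : IsRat f) (hg : IsRat g) : IsRat (f - g) := by
  rw [sub_eq_add_neg]
  exact isRat_add hf (isRat_neg hg)

lemma isRat_sum {s : Finset ℕ} {f : ℕ → PowerSeries ℚ} (h : ∀ i ∈ s, IsRat (f i)) :
    IsRat (∑ i ∈ s, f i) := by
  classical
  induction s using Finset.induction_on with
  | empty => simpa using isRat_zero
  | insert _ _ hx ih =>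
    rename_i a s
    rw [Finset.sum_insert hx]
    exact isRat_add (h a (Finset.mem_insert_self a s))
      (ih fun i hi => h i (Finset.mem_insert_of_mem hi))

lemma isRat_solve {S K F : PowerSeries ℚ} (hS : IsRat S) (hK : IsRat K)
    (h0 : PowerSeries.constantCoeff S = 0) (heq : (1 - S) * F = K) : IsRat F := by
  obtain ⟨pS, qS, hS0, hSe⟩ := hS
  obtain ⟨pK, qK, hK0, hKe⟩ := hK
  refine ⟨qS * pK, (qS - pS) * qK, ?_, ?_⟩
  · rw [Polynomial.mul_coeff_zero, Polynomial.coeff_sub]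
    have hpS0 : pS.coeff 0 = 0 := by
      have h1 : PowerSeries.constantCoeff ((pS : Polynomial ℚ) : PowerSeries ℚ)
          = PowerSeries.constantCoeff ((qS : PowerSeries ℚ) * S) := by rw [hSe]
      rw [map_mul, h0, mul_zero] at h1
      rw [← Polynomial.coeff_coe pS 0, PowerSeries.coeff_zero_eq_constantCoeff, h1]
    rw [hpS0, sub_zero]
    exact mul_ne_zero hS0 hK0
  · rw [Polynomial.coe_mul, Polynomial.coe_sub, Polynomial.coe_mul]
    have key : ((qS : PowerSeries ℚ) - pS) = (qS : PowerSeries ℚ) * (1 - S) := by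
      rw [mul_sub, mul_one, hSe]
    calc ((qS : PowerSeries ℚ) - pS) * qK * F
        = (qS : PowerSeries ℚ) * ((1 - S) * F) * qK := by rw [key]; ring
    _ = (qS : PowerSeries ℚ) * ((qK : PowerSeries ℚ) * K) := by rw [heq]; ring
    _ = (qS : PowerSeries ℚ) * pK := by rw [hKe]

lemma numT_zero_eq_nil {B : PF} (h : numT B = 0) : B = PF.nil := by
  cases B with
  | nil => rfl
  | node c r => simp at h

/-- MAIN rationality theorem for Fv -/
lemma isRat_Fv (B : PF) : IsRat (Fv B) := by
  have H : ∀ N (B : PF), B.size ≤ N → IsRat (Fv B) := by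
    intro N
    induction N with
    | zero =>
      intro B hB
      rw [size_eq_zero (Nat.le_zero.mp hB), Fv_nil]
      exact isRat_zero
    | succ N ih =>
      intro B hB
      cases hBnil : B with
      | nil => rw [Fv_nil]; exact isRat_zero
      | node b₁ b₂ =>
        subst hBnil
        have hne : PF.node b₁ b₂ ≠ PF.nil := by intro h; cases h
        have hsize : (PF.node b₁ b₂).size = 1 + b₁.size + b₂.size := rfl
        have heq := Fv_eq (PF.node b₁ b₂) hne
        set B := PF.node b₁ b₂ with hBdef
        have hp : numT B = numT b₂ + 1 := rfl
        rcases Nat.eq_zero_or_pos (numT b₂) with hz | hpos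
        · -- single-tree pattern
          rw [hp, hz] at heq
          simp only [zero_add, Finset.sum_range_one, pat_zero, Fv_nil, sub_zero, dropT_zero] at heq
          have hpat1 : pat B 1 = b₁ := rfl
          rw [hpat1] at heq
          have hS : IsRat (PowerSeries.X * Fv b₁) :=
            isRat_mul isRat_X (ih b₁ (by rw [hsize] at hB; omega))
          refine isRat_solve hS isRat_one ?_ ?_
          · rw [map_mul]; simp
          · linear_combination heq
        · -- multi-tree pattern
          set e := numT b₂ - 1 with hedef
          have he : numT b₂ = e + 1 := by omega
          rw [hp, he] at heq
          rw [Finset.sum_range_succ'] at heq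
          rw [Finset.sum_range_succ] at heq
          have hpat1 : pat B 1 = b₁ := rfl
          have hpat0 : pat B 0 = PF.nil := pat_zero B
          rw [hpat0, hpat1, Fv_nil, sub_zero, dropT_zero] at heq
          have hpatp : pat B (e + 1 + 1) = B := by
            rw [← he, ← hp]
            exact pat_numT B (by rw [hp]; omega)
          rw [hpatp] at heq
          -- heq : Fv B = 1 + X * ((Σ_{δ ∈ range e} (Fv (pat B (δ+1+1)) - Fv (pat B (δ+1))) * Fv (dropT (δ+1) B))
          --        + (Fv B - Fv (pat B (e+1))) * Fv (dropT (e+1) B) + Fv b₁ * Fv B)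
          have hb1size : b₁.size ≤ N := by rw [hsize] at hB; omega
          have hdropsize : ∀ k, 1 ≤ k → (dropT k B).size ≤ N := by
            intro k hk
            have := size_dropT_lt k B hk hne
            omega
          have hpatsize : ∀ k, 1 ≤ k → k < numT B → (pat B k).size ≤ N := by
            intro k hk1 hk2
            have := size_pat_lt B k hne (Or.inr hk2)
            omega
          have hmid : IsRat (∑ δ ∈ Finset.range e,
              (Fv (pat B (δ+1+1)) - Fv (pat B (δ+1))) * Fv (dropT (δ+1) B)) := by
            apply isRat_sum
            intro δ hδ
            have hδe : δ < e := Finset.mem_range.mp hδ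
            apply isRat_mul
            · apply isRat_sub
              · exact ih _ (hpatsize (δ+1+1) (by omega) (by rw [hp]; omega))
              · exact ih _ (hpatsize (δ+1) (by omega) (by rw [hp]; omega))
            · exact ih _ (hdropsize (δ+1) (by omega))
          have hpatlast : IsRat (Fv (pat B (e+1))) :=
            ih _ (hpatsize (e+1) (by omega) (by rw [hp]; omega))
          have hdroplast : IsRat (Fv (dropT (e+1) B)) := ih _ (hdropsize (e+1) (by omega))
          have hb1 : IsRat (Fv b₁) := ih _ hb1size
          have hS : IsRat (PowerSeries.X * (Fv b₁ + Fv (dropT (e+1) B))) :=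
            isRat_mul isRat_X (isRat_add hb1 hdroplast)
          have hK : IsRat (1 + PowerSeries.X * (∑ δ ∈ Finset.range e,
              (Fv (pat B (δ+1+1)) - Fv (pat B (δ+1))) * Fv (dropT (δ+1) B))
              - PowerSeries.X * (Fv (pat B (e+1)) * Fv (dropT (e+1) B))) := by
            apply isRat_sub
            · exact isRat_add isRat_one (isRat_mul isRat_X hmid)
            · exact isRat_mul isRat_X (isRat_mul hpatlast hdroplast)
          refine isRat_solve hS hK ?_ ?_
          · rw [map_mul]; simp
          · linear_combination heq
  exact H B.size B le_rfl



open scoped Classical in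
lemma ncard_eq_cnt (A : PF) (n : ℕ) :
    Set.ncard {X : PF | X ∈ PF.Av A ∧ X.size = n} = cnt A n := by
  have hset : {X : PF | X ∈ PF.Av A ∧ X.size = n}
      = ↑((allPF n).filter (fun X => ¬ Minor A X)) := by
    ext X
    simp only [Set.mem_setOf_eq, Finset.coe_filter, mem_allPF, PF.Av]
    rw [contains_iff_minor]
    tauto
  rw [hset, Set.ncard_coe_finset, cnt]

lemma F_eq_Fv (A : PF) : PF.F A = Fv A := by
  unfold PF.F Fv
  ext n
  rw [PowerSeries.coeff_mk, PowerSeries.coeff_mk, ncard_eq_cnt]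

end PFAux

/-- The generating function of `Av(A)` is a rational function. -/
theorem F_rational (A : PF) :
    ∃ p q : Polynomial ℚ, q.coeff 0 ≠ 0 ∧
      (q : PowerSeries ℚ) * PF.F A = (p : PowerSeries ℚ) := by
  obtain ⟨p, q, h0, hq⟩ := PFAux.isRat_Fv A
  refine ⟨p, q, h0, ?_⟩
  rw [PFAux.F_eq_Fv]
  exact hq
end

section
/- For any arch systems A, B with A Wilf-equivalent to B, the atoms arch-over-A and arch-over-B are Wilf-equivalent; i.e., if there is a size-preserving bijection between Av(A) and Av(B) then there is one between Av(arch over A) and Av(arch over B). -/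
section ArchLift

open PF

lemma PFL.append_node (c r q : PF) : (PF.node c r) ++ q = PF.node c (r ++ q) := rfl
lemma PFL.nil_append (q : PF) : PF.nil ++ q = q := rfl
lemma PFL.append_nil (p : PF) : p ++ PF.nil = p := by
  induction p with
  | nil => rfl
  | node c r ihc ihr => rw [PFL.append_node, ihr]

lemma PFL.contains_rest {r r' : PF} (c : PF) (h : PF.Contains r r') :
    PF.Contains (PF.node c r) (PF.node c r') :=
  Relation.ReflTransGen.lift (fun x => PF.node c x) (fun _ _ h => PF.Del.rest c h) r r' h

lemma PFL.contains_inside {c c' : PF} (r : PF) (h : PF.Contains c c') :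
    PF.Contains (PF.node c r) (PF.node c' r) :=
  Relation.ReflTransGen.lift (fun x => PF.node x r) (fun _ _ h => PF.Del.inside r h) c c' h

lemma PFL.contains_append_right : ∀ X Y : PF, PF.Contains (X ++ Y) Y
  | PF.nil, Y => by rw [PFL.nil_append]; exact Relation.ReflTransGen.refl
  | PF.node c r, Y => by
    rw [PFL.append_node]
    exact (PFL.contains_rest c (PFL.contains_append_right r Y)).trans
      ((Relation.ReflTransGen.single (PF.Del.root c Y)).trans (PFL.contains_append_right c Y))

lemma PFL.contains_nil (X : PF) : PF.Contains X PF.nil := by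
  have := PFL.contains_append_right X PF.nil
  rwa [PFL.append_nil] at this

lemma PFL.contains_append_left : ∀ X Y : PF, PF.Contains (X ++ Y) X
  | PF.nil, Y => PFL.contains_nil Y
  | PF.node c r, Y => by
    rw [PFL.append_node]
    exact PFL.contains_rest c (PFL.contains_append_left r Y)

lemma PFL.node_contains_left (c r : PF) : PF.Contains (PF.node c r) c :=
  (Relation.ReflTransGen.single (PF.Del.root c r)).trans (PFL.contains_append_left c r)

lemma PFL.node_contains_right (c r : PF) : PF.Contains (PF.node c r) r :=
  (Relation.ReflTransGen.single (PF.Del.root c r)).trans (PFL.contains_append_right c r)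

/-- Every arch's contents avoid `A`, recursively. -/
def PFGood (A : PF) : PF → Prop
  | .nil => True
  | .node c r => ¬ PF.Contains c A ∧ PFGood A c ∧ PFGood A r

lemma PFL.good_append {A : PF} : ∀ {c r : PF}, PFGood A c → PFGood A r → PFGood A (c ++ r)
  | PF.nil, r, _, hr => by rwa [PFL.nil_append]
  | PF.node c0 r0, r, hc, hr => by
    rw [PFL.append_node]
    simp only [PFGood] at hc ⊢
    exact ⟨hc.1, hc.2.1, PFL.good_append hc.2.2 hr⟩

lemma PFL.good_of_del {A X Y : PF} (h : PF.Del X Y) (hX : PFGood A X) : PFGood A Y := by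
  induction h with
  | root c r =>
      simp only [PFGood] at hX
      exact PFL.good_append hX.2.1 hX.2.2
  | inside r h ih =>
      simp only [PFGood] at hX ⊢
      exact ⟨fun hc => hX.1 ((Relation.ReflTransGen.single h).trans hc), ih hX.2.1, hX.2.2⟩
  | rest c h ih =>
      simp only [PFGood] at hX ⊢
      exact ⟨hX.1, hX.2.1, ih hX.2.2⟩

lemma PFL.good_of_contains {A X Y : PF} (h : PF.Contains X Y) (hX : PFGood A X) : PFGood A Y := by
  induction h with
  | refl => exact hX
  | tail _ h2 ih => exact PFL.good_of_del h2 ih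

lemma PFL.av_good : ∀ {X A : PF}, X ∈ PF.Av A → PFGood A X
  | PF.nil, A, _ => trivial
  | PF.node c r, A, h => by
    simp only [PFGood]
    exact ⟨fun hc => h ((PFL.node_contains_left c r).trans hc),
      PFL.av_good (fun hc => h ((PFL.node_contains_left c r).trans hc)),
      PFL.av_good (fun hr => h ((PFL.node_contains_right c r).trans hr))⟩

lemma PFL.good_av {A X : PF} (h : PFGood A X) : X ∈ PF.Av (PF.node A PF.nil) := by
  intro hc
  have h2 := PFL.good_of_contains hc h
  simp only [PFGood] at h2
  exact h2.1 Relation.ReflTransGen.refl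

lemma PFL.av_good_node : ∀ {X A : PF}, X ∈ PF.Av (PF.node A PF.nil) → PFGood A X
  | PF.nil, A, _ => trivial
  | PF.node c r, A, h => by
    simp only [PFGood]
    refine ⟨?_,
      PFL.av_good_node (fun hc => h ((PFL.node_contains_left c r).trans hc)),
      PFL.av_good_node (fun hr => h ((PFL.node_contains_right c r).trans hr))⟩
    intro hcA
    exact h ((PFL.contains_inside r hcA).trans (PFL.contains_rest A (PFL.contains_nil r)))

/-- apply `f` to the contents of each top-level arch -/
def PFPhi (f : PF → PF) : PF → PF
  | .nil => .nil
  | .node c r => .node (f c) (PFPhi f r)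

lemma PFL.phi_size {A : PF} {f : PF → PF} (hf : ∀ c, c ∈ PF.Av A → (f c).size = c.size) :
    ∀ {X : PF}, PFGood A X → (PFPhi f X).size = X.size
  | PF.nil, _ => rfl
  | PF.node c r, h => by
    simp only [PFGood] at h
    simp only [PFPhi, PF.size, hf c h.1, PFL.phi_size hf h.2.2]

lemma PFL.phi_good {A B : PF} {f : PF → PF} (hf : ∀ c, c ∈ PF.Av A → f c ∈ PF.Av B) :
    ∀ {X : PF}, PFGood A X → PFGood B (PFPhi f X)
  | PF.nil, _ => trivial
  | PF.node c r, h => by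
    simp only [PFGood] at h
    simp only [PFPhi, PFGood]
    exact ⟨hf c h.1, PFL.av_good (hf c h.1), PFL.phi_good hf h.2.2⟩

lemma PFL.phi_inv {A : PF} {f g : PF → PF} (hgf : ∀ c, c ∈ PF.Av A → g (f c) = c) :
    ∀ {X : PF}, PFGood A X → PFPhi g (PFPhi f X) = X
  | PF.nil, _ => rfl
  | PF.node c r, h => by
    simp only [PFGood] at h
    simp only [PFPhi, hgf c h.1, PFL.phi_inv hgf h.2.2]

end ArchLift

/-- If there is a size-preserving bijection between `Av(A)` and `Av(B)`, then
there is one between `Av(arch over A)` and `Av(arch over B)`. -/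
theorem bijection_lifts_to_arch (A B : PF)
    (h : ∃ e : {X : PF // X ∈ PF.Av A} ≃ {X : PF // X ∈ PF.Av B},
      ∀ x, (e x).val.size = x.val.size) :
    ∃ e : {X : PF // X ∈ PF.Av (PF.node A PF.nil)} ≃ {X : PF // X ∈ PF.Av (PF.node B PF.nil)},
      ∀ x, (e x).val.size = x.val.size := by
  classical
  obtain ⟨e, he⟩ := h
  set f : PF → PF := fun c => if hc : c ∈ PF.Av A then (e ⟨c, hc⟩).val else c with hfdef
  set g : PF → PF := fun d => if hd : d ∈ PF.Av B then (e.symm ⟨d, hd⟩).val else d with hgdef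
  have hfav : ∀ c, c ∈ PF.Av A → f c ∈ PF.Av B := by
    intro c hc
    simp only [hfdef, dif_pos hc]
    exact (e ⟨c, hc⟩).2
  have hgav : ∀ d, d ∈ PF.Av B → g d ∈ PF.Av A := by
    intro d hd
    simp only [hgdef, dif_pos hd]
    exact (e.symm ⟨d, hd⟩).2
  have hfsize : ∀ c, c ∈ PF.Av A → (f c).size = c.size := by
    intro c hc
    simp only [hfdef, dif_pos hc]
    exact he ⟨c, hc⟩
  have hgsize : ∀ d, d ∈ PF.Av B → (g d).size = d.size := by
    intro d hd
    simp only [hgdef, dif_pos hd]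
    have h2 := he (e.symm ⟨d, hd⟩)
    rw [Equiv.apply_symm_apply] at h2
    exact h2.symm
  have hgf : ∀ c, c ∈ PF.Av A → g (f c) = c := by
    intro c hc
    simp only [hfdef, hgdef, dif_pos hc, dif_pos ((e ⟨c, hc⟩).2)]
    have h3 : (⟨(e ⟨c, hc⟩).val, (e ⟨c, hc⟩).2⟩ : {X : PF // X ∈ PF.Av B}) = e ⟨c, hc⟩ :=
      Subtype.ext rfl
    rw [h3, Equiv.symm_apply_apply]
  have hfg : ∀ d, d ∈ PF.Av B → f (g d) = d := by
    intro d hd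
    simp only [hfdef, hgdef, dif_pos hd, dif_pos ((e.symm ⟨d, hd⟩).2)]
    have h3 : (⟨(e.symm ⟨d, hd⟩).val, (e.symm ⟨d, hd⟩).2⟩ : {X : PF // X ∈ PF.Av A}) =
        e.symm ⟨d, hd⟩ := Subtype.ext rfl
    rw [h3, Equiv.apply_symm_apply]
  exact ⟨⟨fun x => ⟨PFPhi f x.1, PFL.good_av (PFL.phi_good hfav (PFL.av_good_node x.2))⟩,
         fun y => ⟨PFPhi g y.1, PFL.good_av (PFL.phi_good hgav (PFL.av_good_node y.2))⟩,
         fun x => Subtype.ext (PFL.phi_inv hgf (PFL.av_good_node x.2)),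
         fun y => Subtype.ext (PFL.phi_inv hfg (PFL.av_good_node y.2))⟩,
        fun x => PFL.phi_size hfsize (PFL.av_good_node x.2)⟩
end
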